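/- arXiv:math/0502010 — 17 statements merged into one kernel-verified Lean document; each statement's English description precedes it below -/
import Mathlib

section
/- Let H be a complex inner product space, let a ∈ H be a unit vector, and let r₁, r₂ ∈ [-1,1]. Suppose the vectors x₁,…,xₙ ∈ H satisfy 0 ≤ r₁²‖x_k‖ ≤ Re⟨x_k, r₁ a⟩ and 0 ≤ r₂²‖x_k‖ ≤ Im⟨x_k, r₂ a⟩ for all k ∈ {1,…,n}. Then (r₁² + r₂²)^{1/2} · Σ_{k=1}^n ‖x_k‖ ≤ ‖Σ_{k=1}^n x_k‖. -/
theorem stmt_0 {H : Type*} [NormedAddCommGroup H] [InnerProductSpace ℂ H]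
    (a : H) (ha : ‖a‖ = 1) (r₁ r₂ : ℝ)
    (hr₁ : r₁ ∈ Set.Icc (-1 : ℝ) 1) (hr₂ : r₂ ∈ Set.Icc (-1 : ℝ) 1)
    (n : ℕ) (x : Fin n → H)
    (h₁ : ∀ k, 0 ≤ r₁ ^ 2 * ‖x k‖ ∧ r₁ ^ 2 * ‖x k‖ ≤ (inner ℂ (x k) (r₁ • a) : ℂ).re)
    (h₂ : ∀ k, 0 ≤ r₂ ^ 2 * ‖x k‖ ∧ r₂ ^ 2 * ‖x k‖ ≤ (inner ℂ (x k) (r₂ • a) : ℂ).im) :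
    Real.sqrt (r₁ ^ 2 + r₂ ^ 2) * ∑ k, ‖x k‖ ≤ ‖∑ k, x k‖ := by
  set S := ∑ k, x k with hS
  set s := ∑ k, ‖x k‖ with hs
  set w : ℂ := inner ℂ S a with hw
  have hs0 : 0 ≤ s := Finset.sum_nonneg fun k _ => norm_nonneg _
  have hsm : ∀ r : ℝ, r • a = (r : ℂ) • a := fun r => RCLike.real_smul_eq_coe_smul (K := ℂ) r a
  have hre : (inner ℂ S (r₁ • a) : ℂ).re = r₁ * w.re := by
    rw [hsm, inner_smul_right]
    simp [hw]
  have him : (inner ℂ S (r₂ • a) : ℂ).im = r₂ * w.im := by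
    rw [hsm, inner_smul_right]
    simp [hw]
  have hsum1 : r₁ ^ 2 * s ≤ r₁ * w.re := by
    rw [← hre]
    have : (inner ℂ S (r₁ • a) : ℂ).re = ∑ k, (inner ℂ (x k) (r₁ • a) : ℂ).re := by
      rw [hS, sum_inner]
      exact map_sum Complex.reAddGroupHom _ _
    rw [this, hs, Finset.mul_sum]
    exact Finset.sum_le_sum fun k _ => (h₁ k).2
  have hsum2 : r₂ ^ 2 * s ≤ r₂ * w.im := by
    rw [← him]
    have : (inner ℂ S (r₂ • a) : ℂ).im = ∑ k, (inner ℂ (x k) (r₂ • a) : ℂ).im := by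
      rw [hS, sum_inner]
      exact map_sum Complex.imAddGroupHom _ _
    rw [this, hs, Finset.mul_sum]
    exact Finset.sum_le_sum fun k _ => (h₂ k).2
  have hwnorm : ‖w‖ ≤ ‖S‖ := by
    calc ‖w‖ ≤ ‖S‖ * ‖a‖ := norm_inner_le_norm (𝕜 := ℂ) S a
    _ = ‖S‖ := by rw [ha, mul_one]
  have hwsq : w.re ^ 2 + w.im ^ 2 = ‖w‖ ^ 2 := by
    rw [Complex.sq_norm, Complex.normSq_apply]
    ring
  have hcs : r₁ * w.re + r₂ * w.im ≤ Real.sqrt (r₁ ^ 2 + r₂ ^ 2) * ‖w‖ := by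
    have h1 : (r₁ * w.re + r₂ * w.im) ^ 2 ≤ (r₁ ^ 2 + r₂ ^ 2) * ‖w‖ ^ 2 := by
      rw [← hwsq]; nlinarith [sq_nonneg (r₁ * w.im - r₂ * w.re)]
    have h2 : Real.sqrt (r₁ ^ 2 + r₂ ^ 2) * ‖w‖ =
        Real.sqrt ((r₁ ^ 2 + r₂ ^ 2) * ‖w‖ ^ 2) := by
      rw [Real.sqrt_mul (by positivity), Real.sqrt_sq (norm_nonneg _)]
    rw [h2]
    calc r₁ * w.re + r₂ * w.im ≤ |r₁ * w.re + r₂ * w.im| := le_abs_self _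
    _ = Real.sqrt ((r₁ * w.re + r₂ * w.im) ^ 2) := (Real.sqrt_sq_eq_abs _).symm
    _ ≤ _ := Real.sqrt_le_sqrt h1
  have key : (r₁ ^ 2 + r₂ ^ 2) * s ≤ Real.sqrt (r₁ ^ 2 + r₂ ^ 2) * ‖S‖ := by
    have := add_le_add hsum1 hsum2
    nlinarith [mul_le_mul_of_nonneg_left hwnorm (Real.sqrt_nonneg (r₁ ^ 2 + r₂ ^ 2))]
  rcases eq_or_lt_of_le (by positivity : (0:ℝ) ≤ r₁ ^ 2 + r₂ ^ 2) with h0 | h0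
  · rw [← h0, Real.sqrt_zero, zero_mul]; exact norm_nonneg _
  · have hsq : 0 < Real.sqrt (r₁ ^ 2 + r₂ ^ 2) := Real.sqrt_pos.mpr h0
    have hmul : Real.sqrt (r₁ ^ 2 + r₂ ^ 2) * Real.sqrt (r₁ ^ 2 + r₂ ^ 2)
        = r₁ ^ 2 + r₂ ^ 2 := Real.mul_self_sqrt h0.le
    nlinarith
end

section
/- Let H be a complex inner product space and a ∈ H a unit vector. Let x₁,…,xₙ ∈ H be nonzero vectors and set α = min_{1≤k≤n} ‖x_k‖. Suppose p₁, p₂ ∈ (0, √(α² + 1)) satisfy ‖x_k − a‖ ≤ p₁ and ‖x_k − i a‖ ≤ p₂ for all k ∈ {1,…,n}. Define α₁ = min_{1≤k≤n} (‖x_k‖² − p₁² + 1)/(2‖x_k‖) and α₂ = min_{1≤k≤n} (‖x_k‖² − p₂² + 1)/(2‖x_k‖). Then (α₁² + α₂²)^{1/2} · Σ_{k=1}^n ‖x_k‖ ≤ ‖Σ_{k=1}^n x_k‖. -/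
open scoped InnerProductSpace ComplexConjugate

set_option maxHeartbeats 1000000 in
theorem stmt_2 {H : Type*} [NormedAddCommGroup H] [InnerProductSpace ℂ H]
    (a : H) (ha : ‖a‖ = 1) (n : ℕ) (hn : 0 < n) (x : Fin n → H) (hx : ∀ k, x k ≠ 0)
    (α : ℝ) (hα : α = ⨅ k, ‖x k‖)
    (p₁ p₂ : ℝ) (hp₁ : p₁ ∈ Set.Ioo 0 (Real.sqrt (α ^ 2 + 1)))
    (hp₂ : p₂ ∈ Set.Ioo 0 (Real.sqrt (α ^ 2 + 1)))
    (h₁ : ∀ k, ‖x k - a‖ ≤ p₁) (h₂ : ∀ k, ‖x k - Complex.I • a‖ ≤ p₂)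
    (α₁ α₂ : ℝ)
    (hα₁ : α₁ = ⨅ k, (‖x k‖ ^ 2 - p₁ ^ 2 + 1) / (2 * ‖x k‖))
    (hα₂ : α₂ = ⨅ k, (‖x k‖ ^ 2 - p₂ ^ 2 + 1) / (2 * ‖x k‖)) :
    Real.sqrt (α₁ ^ 2 + α₂ ^ 2) * ∑ k, ‖x k‖ ≤ ‖∑ k, x k‖ := by
  have hne : Nonempty (Fin n) := ⟨⟨0, hn⟩⟩
  have hxpos : ∀ k, (0:ℝ) < ‖x k‖ := fun k => norm_pos_iff.mpr (hx k)
  have hα0 : 0 ≤ α := hα ▸ le_ciInf fun k => norm_nonneg _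
  have hαle : ∀ k, α ≤ ‖x k‖ := fun k => hα ▸ ciInf_le (Finite.bddBelow_range _) k
  -- p bounds
  have hp1sq : p₁ ^ 2 ≤ α ^ 2 + 1 := by
    have := hp₁.2.le
    nlinarith [Real.sq_sqrt (by positivity : (0:ℝ) ≤ α ^ 2 + 1), hp₁.1,
      Real.sqrt_nonneg (α ^ 2 + 1)]
  have hp2sq : p₂ ^ 2 ≤ α ^ 2 + 1 := by
    have := hp₂.2.le
    nlinarith [Real.sq_sqrt (by positivity : (0:ℝ) ≤ α ^ 2 + 1), hp₂.1,
      Real.sqrt_nonneg (α ^ 2 + 1)]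
  have hterm1 : ∀ k, 0 ≤ (‖x k‖ ^ 2 - p₁ ^ 2 + 1) / (2 * ‖x k‖) := fun k => by
    have h := hαle k; have h' := hxpos k
    exact div_nonneg (by nlinarith) (by positivity)
  have hterm2 : ∀ k, 0 ≤ (‖x k‖ ^ 2 - p₂ ^ 2 + 1) / (2 * ‖x k‖) := fun k => by
    have h := hαle k; have h' := hxpos k
    exact div_nonneg (by nlinarith) (by positivity)
  have hα₁0 : 0 ≤ α₁ := hα₁ ▸ le_ciInf hterm1
  have hα₂0 : 0 ≤ α₂ := hα₂ ▸ le_ciInf hterm2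
  have hα₁le : ∀ k, α₁ ≤ (‖x k‖ ^ 2 - p₁ ^ 2 + 1) / (2 * ‖x k‖) := fun k =>
    hα₁ ▸ ciInf_le (Finite.bddBelow_range _) k
  have hα₂le : ∀ k, α₂ ≤ (‖x k‖ ^ 2 - p₂ ^ 2 + 1) / (2 * ‖x k‖) := fun k =>
    hα₂ ▸ ciInf_le (Finite.bddBelow_range _) k
  -- real part bound pointwise
  have hre : ∀ k, α₁ * ‖x k‖ ≤ (⟪a, x k⟫_ℂ).re := by
    intro k
    have hsq : ‖x k - a‖ ^ 2 = ‖x k‖ ^ 2 - 2 * (⟪x k, a⟫_ℂ).re + ‖a‖ ^ 2 :=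
      norm_sub_sq (𝕜 := ℂ) (x k) a
    have hb : ‖x k - a‖ ^ 2 ≤ p₁ ^ 2 := by
      have := h₁ k
      nlinarith [norm_nonneg (x k - a), hp₁.1]
    have h1 : (‖x k‖ ^ 2 - p₁ ^ 2 + 1) / 2 ≤ (⟪x k, a⟫_ℂ).re := by
      rw [ha] at hsq; nlinarith
    have h2 : α₁ * ‖x k‖ ≤ (‖x k‖ ^ 2 - p₁ ^ 2 + 1) / 2 := by
      have h := hα₁le k
      have hk := hxpos k
      rw [le_div_iff₀ (by positivity)] at h
      rw [le_div_iff₀ (by norm_num : (0:ℝ) < 2)]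
      nlinarith
    have hconj : (⟪a, x k⟫_ℂ).re = (⟪x k, a⟫_ℂ).re := by
      rw [← inner_conj_symm (𝕜 := ℂ) a (x k), Complex.conj_re]
    rw [hconj]; linarith
  have him : ∀ k, α₂ * ‖x k‖ ≤ (⟪a, x k⟫_ℂ).im := by
    intro k
    have hsq : ‖x k - Complex.I • a‖ ^ 2
        = ‖x k‖ ^ 2 - 2 * (⟪x k, Complex.I • a⟫_ℂ).re + ‖Complex.I • a‖ ^ 2 :=
      norm_sub_sq (𝕜 := ℂ) (x k) (Complex.I • a)
    have hIa : ‖Complex.I • a‖ = 1 := by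
      rw [norm_smul, ha]; simp
    have hreI : (⟪x k, Complex.I • a⟫_ℂ).re = -(⟪x k, a⟫_ℂ).im := by
      rw [inner_smul_right]; simp
    have hb : ‖x k - Complex.I • a‖ ^ 2 ≤ p₂ ^ 2 := by
      have := h₂ k
      nlinarith [norm_nonneg (x k - Complex.I • a), hp₂.1]
    have h1 : (‖x k‖ ^ 2 - p₂ ^ 2 + 1) / 2 ≤ -(⟪x k, a⟫_ℂ).im := by
      rw [hIa, hreI] at hsq; nlinarith
    have h2 : α₂ * ‖x k‖ ≤ (‖x k‖ ^ 2 - p₂ ^ 2 + 1) / 2 := by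
      have h := hα₂le k
      have hk := hxpos k
      rw [le_div_iff₀ (by positivity)] at h
      rw [le_div_iff₀ (by norm_num : (0:ℝ) < 2)]
      nlinarith
    have hconj : (⟪a, x k⟫_ℂ).im = -(⟪x k, a⟫_ℂ).im := by
      rw [← inner_conj_symm (𝕜 := ℂ) a (x k), Complex.conj_im]
    rw [hconj]; linarith
  set s := ∑ k, x k with hs
  set S := ∑ k, ‖x k‖ with hSdef
  have hS0 : 0 ≤ S := Finset.sum_nonneg fun k _ => norm_nonneg _
  have hinner : ⟪a, s⟫_ℂ = ∑ k, ⟪a, x k⟫_ℂ := inner_sum _ _ _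
  have hreS : α₁ * S ≤ (⟪a, s⟫_ℂ).re := by
    rw [hinner, Complex.re_sum, hSdef, Finset.mul_sum]
    exact Finset.sum_le_sum fun k _ => hre k
  have himS : α₂ * S ≤ (⟪a, s⟫_ℂ).im := by
    rw [hinner, Complex.im_sum, hSdef, Finset.mul_sum]
    exact Finset.sum_le_sum fun k _ => him k
  have habs : ‖⟪a, s⟫_ℂ‖ ≤ ‖s‖ := by
    have := norm_inner_le_norm (𝕜 := ℂ) a s
    rwa [ha, one_mul] at this
  have hnormsq : ‖⟪a, s⟫_ℂ‖ = Real.sqrt ((⟪a, s⟫_ℂ).re ^ 2 + (⟪a, s⟫_ℂ).im ^ 2) := by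
    rw [Complex.norm_def, Complex.normSq_apply]; ring_nf
  have key : Real.sqrt (α₁ ^ 2 + α₂ ^ 2) * S
      ≤ Real.sqrt ((⟪a, s⟫_ℂ).re ^ 2 + (⟪a, s⟫_ℂ).im ^ 2) := by
    have : Real.sqrt (α₁ ^ 2 + α₂ ^ 2) * S
        = Real.sqrt ((α₁ * S) ^ 2 + (α₂ * S) ^ 2) := by
      rw [show (α₁ * S) ^ 2 + (α₂ * S) ^ 2 = (α₁ ^ 2 + α₂ ^ 2) * S ^ 2 by ring,
        Real.sqrt_mul (by positivity), Real.sqrt_sq hS0]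
    rw [this]
    apply Real.sqrt_le_sqrt
    have h1 : (α₁ * S) ^ 2 ≤ (⟪a, s⟫_ℂ).re ^ 2 :=
      pow_le_pow_left₀ (mul_nonneg hα₁0 hS0) hreS 2
    have h2 : (α₂ * S) ^ 2 ≤ (⟪a, s⟫_ℂ).im ^ 2 :=
      pow_le_pow_left₀ (mul_nonneg hα₂0 hS0) himS 2
    linarith
  calc Real.sqrt (α₁ ^ 2 + α₂ ^ 2) * S
      ≤ Real.sqrt ((⟪a, s⟫_ℂ).re ^ 2 + (⟪a, s⟫_ℂ).im ^ 2) := key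
    _ = ‖⟪a, s⟫_ℂ‖ := hnormsq.symm
    _ ≤ ‖s‖ := habs
end

section
/- Let H be a complex inner product space and a ∈ H a unit vector. Let x₁,…,xₙ ∈ H be nonzero vectors and set α = min_{1≤k≤n} ‖x_k‖. Suppose p₁, p₂ ∈ (0, √(α² + 1)) satisfy ‖x_k − a‖ ≤ p₁ and ‖x_k − i a‖ ≤ p₂ for all k ∈ {1,…,n}. Define α₁ = min_{1≤k≤n} (‖x_k‖² − p₁² + 1)/(2‖x_k‖) and α₂ = min_{1≤k≤n} (‖x_k‖² − p₂² + 1)/(2‖x_k‖). Then equality (α₁² + α₂²)^{1/2} · Σ_{k=1}^n ‖x_k‖ = ‖Σ_{k=1}^n x_k‖ holds if and only if Σ_{k=1}^n x_k = (α₁ + i α₂) (Σ_{k=1}^n ‖x_k‖) a. -/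
open scoped ComplexInnerProductSpace

set_option maxHeartbeats 1000000 in
theorem stmt_3 {H : Type*} [NormedAddCommGroup H] [InnerProductSpace ℂ H]
    (a : H) (ha : ‖a‖ = 1) (n : ℕ) (hn : 0 < n) (x : Fin n → H) (hx : ∀ k, x k ≠ 0)
    (α : ℝ) (hα : α = ⨅ k, ‖x k‖)
    (p₁ p₂ : ℝ) (hp₁ : p₁ ∈ Set.Ioo 0 (Real.sqrt (α ^ 2 + 1)))
    (hp₂ : p₂ ∈ Set.Ioo 0 (Real.sqrt (α ^ 2 + 1)))
    (h₁ : ∀ k, ‖x k - a‖ ≤ p₁) (h₂ : ∀ k, ‖x k - Complex.I • a‖ ≤ p₂)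
    (α₁ α₂ : ℝ)
    (hα₁ : α₁ = ⨅ k, (‖x k‖ ^ 2 - p₁ ^ 2 + 1) / (2 * ‖x k‖))
    (hα₂ : α₂ = ⨅ k, (‖x k‖ ^ 2 - p₂ ^ 2 + 1) / (2 * ‖x k‖)) :
    Real.sqrt (α₁ ^ 2 + α₂ ^ 2) * ∑ k, ‖x k‖ = ‖∑ k, x k‖ ↔
      ∑ k, x k = ((α₁ : ℂ) + α₂ * Complex.I) • ((∑ k, ‖x k‖ : ℝ) • a) := by
  have hne : Nonempty (Fin n) := ⟨⟨0, hn⟩⟩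
  have hxpos : ∀ k, (0:ℝ) < ‖x k‖ := fun k => norm_pos_iff.2 (hx k)
  have hbdd : ∀ (f : Fin n → ℝ), BddBelow (Set.range f) := fun f => (Set.finite_range f).bddBelow
  have hα0 : 0 ≤ α := hα ▸ le_ciInf fun k => norm_nonneg _
  have hαle : ∀ k, α ≤ ‖x k‖ := fun k => hα ▸ ciInf_le (hbdd _) k
  have hp1sq : p₁ ^ 2 < α ^ 2 + 1 := by
    nlinarith [Real.sq_sqrt (by positivity : (0:ℝ) ≤ α ^ 2 + 1), hp₁.1, hp₁.2,
      Real.sqrt_nonneg (α ^ 2 + 1)]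
  have hp2sq : p₂ ^ 2 < α ^ 2 + 1 := by
    nlinarith [Real.sq_sqrt (by positivity : (0:ℝ) ≤ α ^ 2 + 1), hp₂.1, hp₂.2,
      Real.sqrt_nonneg (α ^ 2 + 1)]
  have hnum₁ : ∀ k, 0 < ‖x k‖ ^ 2 - p₁ ^ 2 + 1 := fun k => by nlinarith [hαle k, hα0]
  have hnum₂ : ∀ k, 0 < ‖x k‖ ^ 2 - p₂ ^ 2 + 1 := fun k => by nlinarith [hαle k, hα0]
  have hα₁pos : 0 < α₁ := by
    obtain ⟨k, hk⟩ := exists_eq_ciInf_of_finite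
      (f := fun k => (‖x k‖ ^ 2 - p₁ ^ 2 + 1) / (2 * ‖x k‖))
    rw [hα₁, ← hk]
    exact div_pos (hnum₁ k) (by have := hxpos k; positivity)
  have hα₂pos : 0 < α₂ := by
    obtain ⟨k, hk⟩ := exists_eq_ciInf_of_finite
      (f := fun k => (‖x k‖ ^ 2 - p₂ ^ 2 + 1) / (2 * ‖x k‖))
    rw [hα₂, ← hk]
    exact div_pos (hnum₂ k) (by have := hxpos k; positivity)
  have hα₁le : ∀ k, α₁ * ‖x k‖ ≤ (‖x k‖ ^ 2 - p₁ ^ 2 + 1) / 2 := by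
    intro k
    have h := hα₁ ▸ ciInf_le (hbdd _) k
    rw [le_div_iff₀ (by have := hxpos k; positivity)] at h
    linarith
  have hα₂le : ∀ k, α₂ * ‖x k‖ ≤ (‖x k‖ ^ 2 - p₂ ^ 2 + 1) / 2 := by
    intro k
    have h := hα₂ ▸ ciInf_le (hbdd _) k
    rw [le_div_iff₀ (by have := hxpos k; positivity)] at h
    linarith
  have key₁ : ∀ k, α₁ * ‖x k‖ ≤ (⟪x k, a⟫).re := by
    intro k
    have hsq : ‖x k - a‖ ^ 2 ≤ p₁ ^ 2 := by
      have := norm_nonneg (x k - a); nlinarith [h₁ k, hp₁.1]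
    have hexp := norm_sub_sq (𝕜 := ℂ) (x k) a
    simp only [RCLike.re_to_complex] at hexp
    rw [ha] at hexp
    nlinarith [hα₁le k]
  have key₂ : ∀ k, α₂ * ‖x k‖ ≤ (⟪x k, Complex.I • a⟫).re := by
    intro k
    have hsq : ‖x k - Complex.I • a‖ ^ 2 ≤ p₂ ^ 2 := by
      have := norm_nonneg (x k - Complex.I • a); nlinarith [h₂ k, hp₂.1]
    have hexp := norm_sub_sq (𝕜 := ℂ) (x k) (Complex.I • a)
    simp only [RCLike.re_to_complex] at hexp
    rw [norm_smul, Complex.norm_I, ha, one_mul] at hexp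
    nlinarith [hα₂le k]
  set S : ℝ := ∑ k, ‖x k‖ with hSdef
  set s : H := ∑ k, x k with hsdef
  set c : ℂ := (α₁ : ℂ) + α₂ * Complex.I with hcdef
  have hS0 : 0 ≤ S := Finset.sum_nonneg fun k _ => norm_nonneg _
  set r : ℝ := Real.sqrt (α₁ ^ 2 + α₂ ^ 2) with hrdef
  have hr2 : r ^ 2 = α₁ ^ 2 + α₂ ^ 2 := Real.sq_sqrt (by positivity)
  have hrpos : 0 < r := Real.sqrt_pos.2 (by positivity)
  have hnc : ‖c‖ = r := by
    rw [hcdef, hrdef, Complex.norm_add_mul_I]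
  have hnv : ‖c • a‖ = r := by rw [norm_smul, hnc, ha, mul_one]
  have hsum₁ : α₁ * S ≤ (⟪s, a⟫).re := by
    rw [hsdef, sum_inner, Complex.re_sum, hSdef, Finset.mul_sum]
    exact Finset.sum_le_sum fun k _ => key₁ k
  have hsum₂ : α₂ * S ≤ (⟪s, Complex.I • a⟫).re := by
    rw [hsdef, sum_inner, Complex.re_sum, hSdef, Finset.mul_sum]
    exact Finset.sum_le_sum fun k _ => key₂ k
  have hvre : (⟪s, c • a⟫).re
      = α₁ * (⟪s, a⟫).re + α₂ * (⟪s, Complex.I • a⟫).re := by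
    rw [show (Complex.I • a : H) = ((Complex.I : ℂ) • a) from rfl]
    rw [inner_smul_right, inner_smul_right, hcdef]
    simp [add_mul, Complex.add_re, Complex.mul_re]
  constructor
  · intro heq
    have hre_ge : r * ‖s‖ ≤ (⟪s, c • a⟫).re := by
      have e1 : α₁ * (α₁ * S) ≤ α₁ * (⟪s, a⟫).re :=
        mul_le_mul_of_nonneg_left (hsum₁) hα₁pos.le
      have e2 : α₂ * (α₂ * S) ≤ α₂ * (⟪s, Complex.I • a⟫).re :=
        mul_le_mul_of_nonneg_left (hsum₂) hα₂pos.le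
      have hrs : r * ‖s‖ = (α₁ ^ 2 + α₂ ^ 2) * S := by
        rw [← heq, ← hr2]; ring
      rw [hvre, hrs]; nlinarith
    have habs : ‖⟪s, c • a⟫‖ ≤ ‖s‖ * r := by
      have := norm_inner_le_norm (𝕜 := ℂ) s (c • a)
      rwa [hnv] at this
    have hreq : (⟪s, c • a⟫).re = ‖s‖ * r :=
      le_antisymm ((Complex.re_le_norm _).trans habs) (by linarith)
    have habs_eq : ‖⟪s, c • a⟫‖ = (⟪s, c • a⟫).re :=
      le_antisymm (by rw [hreq]; linarith [habs]) (Complex.re_le_norm _)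
    have him : (⟪s, c • a⟫).im = 0 := by
      have h := Complex.sq_norm ⟪s, c • a⟫
      rw [habs_eq, Complex.normSq_apply] at h
      have h2 : (⟪s, c • a⟫).re ^ 2 = (⟪s, c • a⟫).re * (⟪s, c • a⟫).re := sq _
      have h3 : (⟪s, c • a⟫).im * (⟪s, c • a⟫).im = 0 := by linarith
      exact mul_self_eq_zero.1 h3
    have hinner : ⟪s, c • a⟫ = (‖s‖ : ℂ) * (‖c • a‖ : ℂ) := by
      apply Complex.ext
      · rw [hreq, hnv]; simp
      · rw [him, hnv]; simp
    have hcs := inner_eq_norm_mul_iff.1 hinner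
    rw [hnv, ← heq] at hcs
    -- hcs : (r : ℂ) • s = ((r * S : ℝ) : ℂ) • (c • a)
    rw [← RCLike.real_smul_eq_coe_smul (K := ℂ), ← RCLike.real_smul_eq_coe_smul (K := ℂ)] at hcs
    have hcs' : r • s = r • (S • (c • a)) := by rw [hcs, smul_smul]
    have := smul_right_injective H hrpos.ne' hcs'
    rw [this, smul_comm]
  · intro hs
    rw [hs, norm_smul, norm_smul, hnc, ha, mul_one, Real.norm_eq_abs, abs_of_nonneg hS0]
end

section
/- Let H be a complex inner product space and a ∈ H a unit vector. Suppose the nonzero vectors x₁,…,xₙ ∈ H satisfy ‖x_k − a‖ ≤ 1 and ‖x_k − i a‖ ≤ 1 for all k ∈ {1,…,n}, and let α = min_{1≤k≤n} ‖x_k‖. Then (α/√2) · Σ_{k=1}^n ‖x_k‖ ≤ ‖Σ_{k=1}^n x_k‖. -/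
open scoped InnerProductSpace ComplexConjugate

theorem stmt_4 {H : Type*} [NormedAddCommGroup H] [InnerProductSpace ℂ H]
    (a : H) (ha : ‖a‖ = 1) (n : ℕ) (hn : 0 < n) (x : Fin n → H) (hx : ∀ k, x k ≠ 0)
    (h₁ : ∀ k, ‖x k - a‖ ≤ 1) (h₂ : ∀ k, ‖x k - Complex.I • a‖ ≤ 1)
    (α : ℝ) (hα : α = ⨅ k, ‖x k‖) :
    (α / Real.sqrt 2) * ∑ k, ‖x k‖ ≤ ‖∑ k, x k‖ := by
  haveI : Nonempty (Fin n) := ⟨⟨0, hn⟩⟩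
  set b : H := a + Complex.I • a with hb
  have hIa : ‖Complex.I • a‖ = 1 := by
    rw [norm_smul, ha, Complex.norm_I, one_mul]
  -- pointwise bound: Re ⟪x k, b⟫ ≥ ‖x k‖²
  have key : ∀ k, ‖x k‖ ^ 2 ≤ Complex.re ⟪x k, b⟫_ℂ := by
    intro k
    have e1 : ‖x k - a‖ ^ 2 = ‖x k‖ ^ 2 - 2 * Complex.re ⟪x k, a⟫_ℂ + ‖a‖ ^ 2 :=
      norm_sub_sq (𝕜 := ℂ) _ _
    have e2 : ‖x k - Complex.I • a‖ ^ 2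
        = ‖x k‖ ^ 2 - 2 * Complex.re ⟪x k, Complex.I • a⟫_ℂ + ‖Complex.I • a‖ ^ 2 :=
      norm_sub_sq (𝕜 := ℂ) _ _
    have s1 : ‖x k - a‖ ^ 2 ≤ 1 := by
      have := h₁ k
      nlinarith [norm_nonneg (x k - a)]
    have s2 : ‖x k - Complex.I • a‖ ^ 2 ≤ 1 := by
      have := h₂ k
      nlinarith [norm_nonneg (x k - Complex.I • a)]
    have r1 : ‖x k‖ ^ 2 / 2 ≤ Complex.re ⟪x k, a⟫_ℂ := by
      rw [e1, ha] at s1; nlinarith [sq_nonneg (‖x k - a‖)]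
    have r2 : ‖x k‖ ^ 2 / 2 ≤ Complex.re ⟪x k, Complex.I • a⟫_ℂ := by
      rw [e2, hIa] at s2; nlinarith
    have : ⟪x k, b⟫_ℂ = ⟪x k, a⟫_ℂ + ⟪x k, Complex.I • a⟫_ℂ := by
      rw [hb, inner_add_right]
    rw [this, Complex.add_re]
    linarith
  have hα0 : 0 ≤ α := by
    rw [hα]
    exact le_ciInf fun k => norm_nonneg _
  have hαle : ∀ k, α ≤ ‖x k‖ := by
    intro k
    rw [hα]
    exact ciInf_le ⟨0, fun y ⟨k, hk⟩ => hk ▸ norm_nonneg _⟩ k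
  have key2 : ∀ k, α * ‖x k‖ ≤ Complex.re ⟪x k, b⟫_ℂ := by
    intro k
    calc α * ‖x k‖ ≤ ‖x k‖ * ‖x k‖ :=
          mul_le_mul_of_nonneg_right (hαle k) (norm_nonneg _)
      _ = ‖x k‖ ^ 2 := (sq (‖x k‖)).symm
      _ ≤ _ := key k
  have hbnorm : ‖b‖ = Real.sqrt 2 := by
    have : b = (1 + Complex.I) • a := by
      rw [hb, add_smul, one_smul]
    rw [this, norm_smul, ha, mul_one]
    simp [Complex.norm_def, Complex.normSq_apply]
    norm_num
  have hsum : α * ∑ k, ‖x k‖ ≤ Complex.re ⟪∑ k, x k, b⟫_ℂ := by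
    rw [sum_inner, Complex.re_sum, Finset.mul_sum]
    exact Finset.sum_le_sum fun k _ => key2 k
  have cs : Complex.re ⟪∑ k, x k, b⟫_ℂ ≤ ‖∑ k, x k‖ * Real.sqrt 2 := by
    calc Complex.re ⟪∑ k, x k, b⟫_ℂ ≤ ‖⟪∑ k, x k, b⟫_ℂ‖ := Complex.re_le_norm _
      _ ≤ ‖∑ k, x k‖ * ‖b‖ := norm_inner_le_norm _ _
      _ = ‖∑ k, x k‖ * Real.sqrt 2 := by rw [hbnorm]
  have h2 : (0:ℝ) < Real.sqrt 2 := Real.sqrt_pos.mpr (by norm_num)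
  rw [div_mul_eq_mul_div, div_le_iff₀ h2]
  calc α * ∑ k, ‖x k‖ ≤ ‖∑ k, x k‖ * Real.sqrt 2 := le_trans hsum cs
end

section
/- Let H be a real or complex inner product space and a ∈ H a unit vector. Let x₁,…,xₙ ∈ H be nonzero vectors, set α = min_{1≤k≤n} ‖x_k‖, and suppose p ∈ (0, √(α² + 1)) satisfies ‖x_k − a‖ ≤ p for all k ∈ {1,…,n}. Define α₁ = min_{1≤k≤n} (‖x_k‖² − p² + 1)/(2‖x_k‖). Then α₁ · Σ_{k=1}^n ‖x_k‖ ≤ ‖Σ_{k=1}^n x_k‖, with equality if and only if Σ_{k=1}^n x_k = α₁ (Σ_{k=1}^n ‖x_k‖) a. -/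
open RCLike Finset

theorem stmt_5 {𝕜 H : Type*} [RCLike 𝕜] [NormedAddCommGroup H] [InnerProductSpace 𝕜 H]
    (a : H) (ha : ‖a‖ = 1) (n : ℕ) (hn : 0 < n) (x : Fin n → H) (hx : ∀ k, x k ≠ 0)
    (α : ℝ) (hα : α = ⨅ k, ‖x k‖)
    (p : ℝ) (hp : p ∈ Set.Ioo 0 (Real.sqrt (α ^ 2 + 1)))
    (h : ∀ k, ‖x k - a‖ ≤ p)
    (α₁ : ℝ) (hα₁ : α₁ = ⨅ k, (‖x k‖ ^ 2 - p ^ 2 + 1) / (2 * ‖x k‖)) :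
    α₁ * ∑ k, ‖x k‖ ≤ ‖∑ k, x k‖ ∧
      (α₁ * ∑ k, ‖x k‖ = ‖∑ k, x k‖ ↔ ∑ k, x k = ((α₁ * ∑ k, ‖x k‖ : ℝ) : 𝕜) • a) := by
  haveI : Nonempty (Fin n) := ⟨⟨0, hn⟩⟩
  have hpos : ∀ k, 0 < ‖x k‖ := fun k => norm_pos_iff.mpr (hx k)
  have hα0 : 0 ≤ α := hα ▸ le_ciInf fun k => norm_nonneg _
  have hαle : ∀ k, α ≤ ‖x k‖ := fun k => hα ▸ ciInf_le (Finite.bddBelow_range _) k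
  have hp2 : ∀ k, p ^ 2 < ‖x k‖ ^ 2 + 1 := by
    intro k
    have h1 : p ^ 2 < α ^ 2 + 1 := by
      have h2 := hp.2
      have hnn : (0:ℝ) ≤ α ^ 2 + 1 := by positivity
      calc p ^ 2 < Real.sqrt (α ^ 2 + 1) ^ 2 := by nlinarith [hp.1, Real.sqrt_nonneg (α^2+1)]
        _ = α ^ 2 + 1 := Real.sq_sqrt hnn
    nlinarith [hαle k, hα0]
  have hnum : ∀ k, 0 < ‖x k‖ ^ 2 - p ^ 2 + 1 := fun k => by nlinarith [hp2 k]
  have hα₁pos : ∀ k, 0 < (‖x k‖ ^ 2 - p ^ 2 + 1) / (2 * ‖x k‖) := fun k =>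
    div_pos (hnum k) (by have := hpos k; positivity)
  have hα₁0 : 0 ≤ α₁ := hα₁ ▸ le_ciInf fun k => (hα₁pos k).le
  have hα₁le : ∀ k, α₁ ≤ (‖x k‖ ^ 2 - p ^ 2 + 1) / (2 * ‖x k‖) :=
    fun k => hα₁ ▸ ciInf_le (Finite.bddBelow_range _) k
  have key : ∀ k, α₁ * ‖x k‖ ≤ re (inner 𝕜 (x k) a : 𝕜) := by
    intro k
    have hexp : ‖x k - a‖ ^ 2 = ‖x k‖ ^ 2 - 2 * re (inner 𝕜 (x k) a : 𝕜) + ‖a‖ ^ 2 :=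
      norm_sub_sq (𝕜 := 𝕜) (x k) a
    have h2 : ‖x k - a‖ ^ 2 ≤ p ^ 2 := by nlinarith [h k, norm_nonneg (x k - a), hp.1]
    have h3 : (‖x k‖ ^ 2 - p ^ 2 + 1) / (2 * ‖x k‖) * ‖x k‖ = (‖x k‖ ^ 2 - p ^ 2 + 1) / 2 := by
      have hk : ‖x k‖ ≠ 0 := (hpos k).ne'
      field_simp
    calc α₁ * ‖x k‖ ≤ (‖x k‖ ^ 2 - p ^ 2 + 1) / (2 * ‖x k‖) * ‖x k‖ :=
          mul_le_mul_of_nonneg_right (hα₁le k) (norm_nonneg _)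
      _ = (‖x k‖ ^ 2 - p ^ 2 + 1) / 2 := h3
      _ ≤ re (inner 𝕜 (x k) a : 𝕜) := by rw [ha] at hexp; nlinarith
  have hsum : α₁ * ∑ k, ‖x k‖ ≤ re (inner 𝕜 (∑ k, x k) a : 𝕜) := by
    rw [sum_inner, map_sum, Finset.mul_sum]
    exact Finset.sum_le_sum fun k _ => key k
  have hcs : re (inner 𝕜 (∑ k, x k) a : 𝕜) ≤ ‖∑ k, x k‖ := by
    have := re_inner_le_norm (𝕜 := 𝕜) (∑ k, x k) a
    rwa [ha, mul_one] at this
  have hS0 : 0 ≤ ∑ k, ‖x k‖ := Finset.sum_nonneg fun k _ => norm_nonneg _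
  have hmain : α₁ * ∑ k, ‖x k‖ ≤ ‖∑ k, x k‖ := hsum.trans hcs
  refine ⟨hmain, ?_, ?_⟩
  · intro heq
    set u := ∑ k, x k with hu
    have hre : re (inner 𝕜 u a : 𝕜) = ‖u‖ := le_antisymm hcs (heq ▸ hsum)
    have hz : ‖u - ((‖u‖ : ℝ) : 𝕜) • a‖ ^ 2 = 0 := by
      have hexp : ‖u - ((‖u‖ : ℝ) : 𝕜) • a‖ ^ 2
          = ‖u‖ ^ 2 - 2 * re (inner 𝕜 u (((‖u‖ : ℝ) : 𝕜) • a) : 𝕜)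
            + ‖((‖u‖ : ℝ) : 𝕜) • a‖ ^ 2 := norm_sub_sq (𝕜 := 𝕜) _ _
      have h1 : re (inner 𝕜 u (((‖u‖ : ℝ) : 𝕜) • a) : 𝕜) = ‖u‖ * re (inner 𝕜 u a : 𝕜) := by
        rw [inner_smul_right]
        simp
      have h2 : ‖((‖u‖ : ℝ) : 𝕜) • a‖ = ‖u‖ := by
        rw [norm_smul, ha, mul_one, RCLike.norm_ofReal, abs_of_nonneg (norm_nonneg _)]
      rw [hexp, h1, h2, hre]
      ring
    have hz2 : u = ((‖u‖ : ℝ) : 𝕜) • a := by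
      have := pow_eq_zero_iff (n := 2) (by norm_num) |>.mp hz
      rw [norm_eq_zero, sub_eq_zero] at this
      exact this
    rw [← heq] at hz2
    exact hz2
  · intro heq
    rw [heq, norm_smul, ha, mul_one, RCLike.norm_ofReal,
      abs_of_nonneg (mul_nonneg hα₁0 hS0)]
end

section
/- Let H be a complex inner product space and let a₁,…,a_m ∈ H be orthonormal vectors. Let r_t, ρ_t ∈ ℝ for t ∈ {1,…,m}, and suppose the vectors x₁,…,xₙ ∈ H satisfy 0 ≤ r_t²‖x_k‖ ≤ Re⟨x_k, r_t a_t⟩ and 0 ≤ ρ_t²‖x_k‖ ≤ Im⟨x_k, ρ_t a_t⟩ for all k ∈ {1,…,n} and all t ∈ {1,…,m}. Then (Σ_{t=1}^m (r_t² + ρ_t²))^{1/2} · Σ_{k=1}^n ‖x_k‖ ≤ ‖Σ_{k=1}^n x_k‖. -/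
open Finset

theorem stmt_6 {H : Type*} [NormedAddCommGroup H] [InnerProductSpace ℂ H]
    (m : ℕ) (a : Fin m → H) (ha : Orthonormal ℂ a) (r ρ : Fin m → ℝ)
    (n : ℕ) (x : Fin n → H)
    (h₁ : ∀ k t, 0 ≤ r t ^ 2 * ‖x k‖ ∧ r t ^ 2 * ‖x k‖ ≤ (inner ℂ (x k) (r t • a t) : ℂ).re)
    (h₂ : ∀ k t, 0 ≤ ρ t ^ 2 * ‖x k‖ ∧ ρ t ^ 2 * ‖x k‖ ≤ (inner ℂ (x k) (ρ t • a t) : ℂ).im) :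
    Real.sqrt (∑ t, (r t ^ 2 + ρ t ^ 2)) * ∑ k, ‖x k‖ ≤ ‖∑ k, x k‖ := by
  set S := ∑ k, x k with hS
  set s := ∑ k, ‖x k‖ with hs
  set c := ∑ t, (r t ^ 2 + ρ t ^ 2) with hc
  have hs0 : (0:ℝ) ≤ s := Finset.sum_nonneg fun k _ => norm_nonneg _
  have hc0 : (0:ℝ) ≤ c := Finset.sum_nonneg fun t _ => by positivity
  set l : Fin m → ℂ := fun t => (r t : ℂ) - Complex.I * (ρ t : ℂ) with hl
  set v : H := ∑ t, l t • a t with hv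
  have hnv : ‖v‖ = Real.sqrt c := by
    have h2 : (inner ℂ v v : ℂ) = ∑ t, (starRingEnd ℂ) (l t) * l t :=
      ha.inner_sum l l Finset.univ
    have h3 : ‖v‖ ^ 2 = c := by
      have h5 := InnerProductSpace.norm_sq_eq_re_inner (𝕜 := ℂ) v
      rw [RCLike.re_to_complex] at h5
      rw [h5, h2, Complex.re_sum, hc]
      refine Finset.sum_congr rfl fun t _ => ?_
      simp [hl, Complex.ext_iff, mul_comm]
      ring
    rw [← h3, Real.sqrt_sq (norm_nonneg _)]
  -- key inequality
  have key : c * s ≤ ‖S‖ * Real.sqrt c := by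
    have step1 : c * s ≤ (inner ℂ S v : ℂ).re := by
      have hSv : (inner ℂ S v : ℂ).re =
          ∑ t, (r t * (inner ℂ S (a t) : ℂ).re + ρ t * (inner ℂ S (a t) : ℂ).im) := by
        rw [hv, inner_sum, Complex.re_sum]
        refine Finset.sum_congr rfl fun t _ => ?_
        rw [inner_smul_right]
        simp only [hl, Complex.sub_re, Complex.sub_im, Complex.mul_re, Complex.mul_im,
          Complex.ofReal_re, Complex.ofReal_im, Complex.I_re, Complex.I_im]
        ring
      rw [hSv, hc, Finset.sum_mul]
      refine Finset.sum_le_sum fun t _ => ?_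
      have hr : r t ^ 2 * s ≤ r t * (inner ℂ S (a t) : ℂ).re := by
        have : (inner ℂ S ((r t : ℝ) • a t) : ℂ) = ∑ k, inner ℂ (x k) ((r t : ℝ) • a t) := by
          rw [hS, sum_inner]
        have h4 : r t ^ 2 * s ≤ (inner ℂ S ((r t : ℝ) • a t) : ℂ).re := by
          rw [this, Complex.re_sum, hs, Finset.mul_sum]
          exact Finset.sum_le_sum fun k _ => (h₁ k t).2
        calc r t ^ 2 * s ≤ (inner ℂ S ((r t : ℝ) • a t) : ℂ).re := h4
          _ = r t * (inner ℂ S (a t) : ℂ).re := by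
              rw [RCLike.real_smul_eq_coe_smul (K := ℂ), inner_smul_right]; simp
      have hρ : ρ t ^ 2 * s ≤ ρ t * (inner ℂ S (a t) : ℂ).im := by
        have : (inner ℂ S ((ρ t : ℝ) • a t) : ℂ) = ∑ k, inner ℂ (x k) ((ρ t : ℝ) • a t) := by
          rw [hS, sum_inner]
        have h4 : ρ t ^ 2 * s ≤ (inner ℂ S ((ρ t : ℝ) • a t) : ℂ).im := by
          rw [this, Complex.im_sum, hs, Finset.mul_sum]
          exact Finset.sum_le_sum fun k _ => (h₂ k t).2
        calc ρ t ^ 2 * s ≤ (inner ℂ S ((ρ t : ℝ) • a t) : ℂ).im := h4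
          _ = ρ t * (inner ℂ S (a t) : ℂ).im := by
              rw [RCLike.real_smul_eq_coe_smul (K := ℂ), inner_smul_right]; simp
      nlinarith [hr, hρ]
    calc c * s ≤ (inner ℂ S v : ℂ).re := step1
      _ ≤ ‖S‖ * ‖v‖ := by
          have := re_inner_le_norm (𝕜 := ℂ) S v
          rwa [RCLike.re_to_complex] at this
      _ = ‖S‖ * Real.sqrt c := by rw [hnv]
  -- conclude
  rcases eq_or_lt_of_le (Real.sqrt_nonneg c) with h0 | h0
  · rw [← h0, zero_mul]; exact norm_nonneg _
  · have hcs : Real.sqrt c * Real.sqrt c = c := Real.mul_self_sqrt hc0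
    nlinarith [key, hcs, h0]
end

section
/- Let H be a real or complex inner product space and let a₁,…,a_m ∈ H be orthonormal vectors. Let r_t ∈ ℝ for t ∈ {1,…,m}, and suppose the vectors x₁,…,xₙ ∈ H satisfy 0 ≤ r_t²‖x_k‖ ≤ Re⟨x_k, r_t a_t⟩ for all k ∈ {1,…,n} and all t ∈ {1,…,m}. Then (Σ_{t=1}^m r_t²)^{1/2} · Σ_{k=1}^n ‖x_k‖ ≤ ‖Σ_{k=1}^n x_k‖. -/
theorem stmt_8 {𝕜 H : Type*} [RCLike 𝕜] [NormedAddCommGroup H] [InnerProductSpace 𝕜 H]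
    (m : ℕ) (a : Fin m → H) (ha : Orthonormal 𝕜 a) (r : Fin m → ℝ)
    (n : ℕ) (x : Fin n → H)
    (h : ∀ k t, 0 ≤ r t ^ 2 * ‖x k‖ ∧
      r t ^ 2 * ‖x k‖ ≤ RCLike.re (inner 𝕜 (x k) (((r t : ℝ) : 𝕜) • a t) : 𝕜)) :
    Real.sqrt (∑ t, r t ^ 2) * ∑ k, ‖x k‖ ≤ ‖∑ k, x k‖ := by
  set c : ℝ := ∑ t, r t ^ 2 with hc
  set S : H := ∑ k, x k with hS
  set y : H := ∑ t, ((r t : ℝ) : 𝕜) • a t with hy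
  have hc0 : 0 ≤ c := Finset.sum_nonneg fun t _ => sq_nonneg _
  have hA0 : 0 ≤ ∑ k, ‖x k‖ := Finset.sum_nonneg fun k _ => norm_nonneg _
  -- norm of y
  have hyn : ‖y‖ ^ 2 = c := by
    have := ha.inner_sum (fun t => ((r t : ℝ) : 𝕜)) (fun t => ((r t : ℝ) : 𝕜)) Finset.univ
    have h2 : (inner 𝕜 y y : 𝕜) = (c : 𝕜) := by
      rw [hy, this, hc]
      rw [RCLike.ofReal_sum]
      refine Finset.sum_congr rfl fun t _ => ?_
      rw [RCLike.conj_ofReal, ← RCLike.ofReal_mul, sq]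
    have := congrArg RCLike.re h2
    rwa [inner_self_eq_norm_sq, RCLike.ofReal_re] at this
  have hyn' : ‖y‖ = Real.sqrt c := by
    rw [← hyn]; exact (Real.sqrt_sq (norm_nonneg _)).symm
  -- main estimate
  have key : c * ∑ k, ‖x k‖ ≤ ‖S‖ * Real.sqrt c := by
    have h1 : c * ∑ k, ‖x k‖ ≤ RCLike.re (inner 𝕜 S y : 𝕜) := by
      have : RCLike.re (inner 𝕜 S y : 𝕜)
          = ∑ k, ∑ t, RCLike.re (inner 𝕜 (x k) (((r t : ℝ) : 𝕜) • a t) : 𝕜) := by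
        rw [hS, hy, sum_inner]
        rw [map_sum]
        refine Finset.sum_congr rfl fun k _ => ?_
        rw [inner_sum, map_sum]
      rw [this]
      have : c * ∑ k, ‖x k‖ = ∑ k, ∑ t, r t ^ 2 * ‖x k‖ := by
        rw [Finset.sum_comm]
        rw [hc, Finset.sum_mul]
        refine Finset.sum_congr rfl fun t _ => ?_
        rw [Finset.mul_sum]
      rw [this]
      exact Finset.sum_le_sum fun k _ => Finset.sum_le_sum fun t _ => (h k t).2
    calc c * ∑ k, ‖x k‖ ≤ RCLike.re (inner 𝕜 S y : 𝕜) := h1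
      _ ≤ ‖S‖ * ‖y‖ := re_inner_le_norm S y
      _ = ‖S‖ * Real.sqrt c := by rw [hyn']
  rcases eq_or_lt_of_le hc0 with h0 | hpos
  · rw [← h0]; simp
  · have hs : 0 < Real.sqrt c := Real.sqrt_pos.mpr hpos
    rw [← mul_le_mul_iff_of_pos_right hs]
    calc Real.sqrt c * (∑ k, ‖x k‖) * Real.sqrt c
        = c * ∑ k, ‖x k‖ := by
          rw [mul_comm, ← mul_assoc, Real.mul_self_sqrt hc0]
      _ ≤ ‖S‖ * Real.sqrt c := key
end

section
/- Let H be a complex inner product space and let a₁,…,a_m ∈ H be orthonormal vectors. Let x₁,…,xₙ ∈ H be nonzero vectors and set α = min_{1≤k≤n} ‖x_k‖. Suppose for each t ∈ {1,…,m} that p_t, q_t ∈ (0, √(α² + 1)) satisfy ‖x_k − a_t‖ ≤ p_t and ‖x_k − i a_t‖ ≤ q_t for all k ∈ {1,…,n}. Define α_t = min_{1≤k≤n} (‖x_k‖² − p_t² + 1)/(2‖x_k‖) and β_t = min_{1≤k≤n} (‖x_k‖² − q_t² + 1)/(2‖x_k‖). Then (Σ_{t=1}^m (α_t² + β_t²))^{1/2}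 · Σ_{k=1}^n ‖x_k‖ ≤ ‖Σ_{k=1}^n x_k‖. -/
open scoped InnerProductSpace

theorem stmt_9 {H : Type*} [NormedAddCommGroup H] [InnerProductSpace ℂ H]
    (m : ℕ) (a : Fin m → H) (ha : Orthonormal ℂ a)
    (n : ℕ) (hn : 0 < n) (x : Fin n → H) (hx : ∀ k, x k ≠ 0)
    (α : ℝ) (hα : α = ⨅ k, ‖x k‖)
    (p q : Fin m → ℝ)
    (hp : ∀ t, p t ∈ Set.Ioo 0 (Real.sqrt (α ^ 2 + 1)))
    (hq : ∀ t, q t ∈ Set.Ioo 0 (Real.sqrt (α ^ 2 + 1)))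
    (h₁ : ∀ k t, ‖x k - a t‖ ≤ p t) (h₂ : ∀ k t, ‖x k - Complex.I • a t‖ ≤ q t)
    (α' β : Fin m → ℝ)
    (hα' : ∀ t, α' t = ⨅ k, (‖x k‖ ^ 2 - p t ^ 2 + 1) / (2 * ‖x k‖))
    (hβ : ∀ t, β t = ⨅ k, (‖x k‖ ^ 2 - q t ^ 2 + 1) / (2 * ‖x k‖)) :
    Real.sqrt (∑ t, (α' t ^ 2 + β t ^ 2)) * ∑ k, ‖x k‖ ≤ ‖∑ k, x k‖ := by
  have hne : Nonempty (Fin n) := ⟨⟨0, hn⟩⟩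
  have hnorm : ∀ k, (0:ℝ) < ‖x k‖ := fun k => norm_pos_iff.mpr (hx k)
  have hbdd : ∀ f : Fin n → ℝ, BddBelow (Set.range f) :=
    fun f => (Set.finite_range f).bddBelow
  have hα0 : 0 ≤ α := by
    rw [hα]; exact le_ciInf fun k => norm_nonneg _
  have hαle : ∀ k, α ≤ ‖x k‖ := by
    intro k; rw [hα]; exact ciInf_le (hbdd _) k
  -- positivity of the quotients
  have hquot : ∀ (r : ℝ), r ∈ Set.Ioo 0 (Real.sqrt (α ^ 2 + 1)) →
      ∀ k, 0 ≤ (‖x k‖ ^ 2 - r ^ 2 + 1) / (2 * ‖x k‖) := by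
    intro r hr k
    have hr2 : r ^ 2 < α ^ 2 + 1 := by
      have := hr.2
      have h0 := hr.1
      nlinarith [Real.sq_sqrt (by positivity : (0:ℝ) ≤ α ^ 2 + 1), Real.sqrt_nonneg (α ^ 2 + 1)]
    have : α ^ 2 ≤ ‖x k‖ ^ 2 := by nlinarith [hαle k, hnorm k]
    have hnum : 0 ≤ ‖x k‖ ^ 2 - r ^ 2 + 1 := by nlinarith
    positivity
  have hA0 : ∀ t, 0 ≤ α' t := by
    intro t; rw [hα' t]; exact le_ciInf fun k => hquot _ (hp t) k
  have hB0 : ∀ t, 0 ≤ β t := by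
    intro t; rw [hβ t]; exact le_ciInf fun k => hquot _ (hq t) k
  have hat : ∀ t, ‖a t‖ = 1 := fun t => ha.1 t
  -- key pointwise inequalities
  have key1 : ∀ t k, α' t * ‖x k‖ ≤ (⟪x k, a t⟫_ℂ).re := by
    intro t k
    have h := h₁ k t
    have hsq : ‖x k - a t‖ ^ 2 ≤ p t ^ 2 := by
      have := (hp t).1
      nlinarith [norm_nonneg (x k - a t)]
    have hexp : ‖x k - a t‖ ^ 2 = ‖x k‖ ^ 2 - 2 * (⟪x k, a t⟫_ℂ).re + 1 := by
      have := @norm_sub_sq ℂ H _ _ _ (x k) (a t)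
      simpa [hat t] using this
    have hle : α' t ≤ (‖x k‖ ^ 2 - p t ^ 2 + 1) / (2 * ‖x k‖) := by
      rw [hα' t]; exact ciInf_le (hbdd _) k
    have h2 : (‖x k‖ ^ 2 - p t ^ 2 + 1) / (2 * ‖x k‖) * ‖x k‖
        = (‖x k‖ ^ 2 - p t ^ 2 + 1) / 2 := by
      field_simp [(hnorm k).ne']
    have h3 : α' t * ‖x k‖ ≤ (‖x k‖ ^ 2 - p t ^ 2 + 1) / 2 := by
      rw [← h2]; exact mul_le_mul_of_nonneg_right hle (hnorm k).le
    nlinarith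
  have key2 : ∀ t k, β t * ‖x k‖ ≤ -(⟪x k, a t⟫_ℂ).im := by
    intro t k
    have h := h₂ k t
    have hsq : ‖x k - Complex.I • a t‖ ^ 2 ≤ q t ^ 2 := by
      have := (hq t).1
      nlinarith [norm_nonneg (x k - Complex.I • a t)]
    have hexp : ‖x k - Complex.I • a t‖ ^ 2
        = ‖x k‖ ^ 2 - 2 * (-(⟪x k, a t⟫_ℂ).im) + 1 := by
      have h0 := @norm_sub_sq ℂ H _ _ _ (x k) (Complex.I • a t)
      have h1 : ⟪x k, Complex.I • a t⟫_ℂ = Complex.I * ⟪x k, a t⟫_ℂ := by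
        rw [inner_smul_right]
      have h2 : ‖Complex.I • a t‖ = 1 := by
        simp [norm_smul, hat t]
      rw [h0, h1, h2]
      simp [Complex.mul_re]
    have hle : β t ≤ (‖x k‖ ^ 2 - q t ^ 2 + 1) / (2 * ‖x k‖) := by
      rw [hβ t]; exact ciInf_le (hbdd _) k
    have h2 : (‖x k‖ ^ 2 - q t ^ 2 + 1) / (2 * ‖x k‖) * ‖x k‖
        = (‖x k‖ ^ 2 - q t ^ 2 + 1) / 2 := by
      field_simp [(hnorm k).ne']
    have h3 : β t * ‖x k‖ ≤ (‖x k‖ ^ 2 - q t ^ 2 + 1) / 2 := by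
      rw [← h2]; exact mul_le_mul_of_nonneg_right hle (hnorm k).le
    nlinarith
  set S := ∑ k, ‖x k‖ with hS
  set s := ∑ k, x k with hs
  have hS0 : 0 ≤ S := Finset.sum_nonneg fun k _ => norm_nonneg _
  have hinner : ∀ t, ⟪s, a t⟫_ℂ = ∑ k, ⟪x k, a t⟫_ℂ := by
    intro t; rw [hs]; exact sum_inner Finset.univ x (a t)
  have hre : ∀ t, α' t * S ≤ (⟪s, a t⟫_ℂ).re := by
    intro t
    rw [hinner t, Complex.re_sum, hS, Finset.mul_sum]
    exact Finset.sum_le_sum fun k _ => key1 t k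
  have him : ∀ t, β t * S ≤ -(⟪s, a t⟫_ℂ).im := by
    intro t
    have : (∑ k, ⟪x k, a t⟫_ℂ).im = ∑ k, (⟪x k, a t⟫_ℂ).im := Complex.im_sum _ _
    rw [hinner t, this, hS, Finset.mul_sum, ← Finset.sum_neg_distrib]
    exact Finset.sum_le_sum fun k _ => key2 t k
  have hterm : ∀ t, (α' t ^ 2 + β t ^ 2) * S ^ 2 ≤ ‖⟪a t, s⟫_ℂ‖ ^ 2 := by
    intro t
    have hn1 : ‖⟪a t, s⟫_ℂ‖ = ‖⟪s, a t⟫_ℂ‖ := norm_inner_symm _ _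
    have hn2 : ‖⟪s, a t⟫_ℂ‖ ^ 2 = (⟪s, a t⟫_ℂ).re ^ 2 + (⟪s, a t⟫_ℂ).im ^ 2 := by
      rw [Complex.sq_norm, Complex.normSq_apply]; ring
    rw [hn1, hn2]
    have h1 := hre t
    have h2 := him t
    have ha1 : 0 ≤ α' t * S := mul_nonneg (hA0 t) hS0
    have hb1 : 0 ≤ β t * S := mul_nonneg (hB0 t) hS0
    nlinarith
  have hbessel : ∑ t, ‖⟪a t, s⟫_ℂ‖ ^ 2 ≤ ‖s‖ ^ 2 := ha.sum_inner_products_le s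
  have hsum : (∑ t, (α' t ^ 2 + β t ^ 2)) * S ^ 2 ≤ ‖s‖ ^ 2 := by
    calc (∑ t, (α' t ^ 2 + β t ^ 2)) * S ^ 2
        = ∑ t, (α' t ^ 2 + β t ^ 2) * S ^ 2 := by rw [Finset.sum_mul]
      _ ≤ ∑ t, ‖⟪a t, s⟫_ℂ‖ ^ 2 := Finset.sum_le_sum fun t _ => hterm t
      _ ≤ ‖s‖ ^ 2 := hbessel
  have hT0 : 0 ≤ ∑ t, (α' t ^ 2 + β t ^ 2) :=
    Finset.sum_nonneg fun t _ => by positivity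
  calc Real.sqrt (∑ t, (α' t ^ 2 + β t ^ 2)) * S
      = Real.sqrt ((∑ t, (α' t ^ 2 + β t ^ 2)) * S ^ 2) := by
        rw [Real.sqrt_mul hT0, Real.sqrt_sq hS0]
    _ ≤ Real.sqrt (‖s‖ ^ 2) := Real.sqrt_le_sqrt hsum
    _ = ‖s‖ := Real.sqrt_sq (norm_nonneg _)
end

section
/- Let H be a complex inner product space and let a₁,…,a_m ∈ H be orthonormal vectors. Let x₁,…,xₙ ∈ H be nonzero vectors and set α = min_{1≤k≤n} ‖x_k‖. Suppose for each t ∈ {1,…,m} that p_t, q_t ∈ (0, √(α² + 1)) satisfy ‖x_k − a_t‖ ≤ p_t and ‖x_k − i a_t‖ ≤ q_t for all k ∈ {1,…,n}. Define α_t = min_{1≤k≤n} (‖x_k‖² − p_t² + 1)/(2‖x_k‖) and β_t = min_{1≤k≤n} (‖x_k‖² − q_t² + 1)/(2‖x_k‖), and assume Σ_{t=1}^m (α_t² + β_t²) ≠ 0. Then equality (Σ_{t=1}^m (α_t² + β_t²))^{1/2} · Σ_{k=1}^n ‖x_k‖ = ‖Σ_{k=1}^n x_k‖ holds if and only if Σ_{k=1}^n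 x_k = (Σ_{k=1}^n ‖x_k‖) · Σ_{t=1}^m (α_t + i β_t) a_t. -/
theorem stmt_10 {H : Type*} [NormedAddCommGroup H] [InnerProductSpace ℂ H]
    (m : ℕ) (a : Fin m → H) (ha : Orthonormal ℂ a)
    (n : ℕ) (hn : 0 < n) (x : Fin n → H) (hx : ∀ k, x k ≠ 0)
    (α : ℝ) (hα : α = ⨅ k, ‖x k‖)
    (p q : Fin m → ℝ)
    (hp : ∀ t, p t ∈ Set.Ioo 0 (Real.sqrt (α ^ 2 + 1)))
    (hq : ∀ t, q t ∈ Set.Ioo 0 (Real.sqrt (α ^ 2 + 1)))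
    (h₁ : ∀ k t, ‖x k - a t‖ ≤ p t) (h₂ : ∀ k t, ‖x k - Complex.I • a t‖ ≤ q t)
    (α' β : Fin m → ℝ)
    (hα' : ∀ t, α' t = ⨅ k, (‖x k‖ ^ 2 - p t ^ 2 + 1) / (2 * ‖x k‖))
    (hβ : ∀ t, β t = ⨅ k, (‖x k‖ ^ 2 - q t ^ 2 + 1) / (2 * ‖x k‖))
    (hne : ∑ t, (α' t ^ 2 + β t ^ 2) ≠ 0) :
    Real.sqrt (∑ t, (α' t ^ 2 + β t ^ 2)) * ∑ k, ‖x k‖ = ‖∑ k, x k‖ ↔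
      ∑ k, x k = (∑ k, ‖x k‖ : ℝ) • ∑ t, ((α' t : ℂ) + β t * Complex.I) • a t := by
  haveI : NeZero n := ⟨hn.ne'⟩
  have hxpos : ∀ k, 0 < ‖x k‖ := fun k => norm_pos_iff.mpr (hx k)
  have inf_le : ∀ (f : Fin n → ℝ) k, (⨅ j, f j) ≤ f k := fun f k =>
    ciInf_le (Set.Finite.bddBelow (Set.finite_range f)) k
  have inf_pos : ∀ (f : Fin n → ℝ), (∀ k, 0 < f k) → 0 < ⨅ j, f j := by
    intro f hf
    obtain ⟨k₀, hk₀⟩ := Finite.exists_min f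
    have : (⨅ j, f j) = f k₀ := le_antisymm (inf_le f k₀) (le_ciInf hk₀)
    rw [this]; exact hf k₀
  have hαle : ∀ k, α ≤ ‖x k‖ := fun k => hα ▸ inf_le _ k
  have hα0 : 0 ≤ α := hα ▸ le_ciInf fun k => norm_nonneg _
  set C := ∑ t, (α' t ^ 2 + β t ^ 2) with hC
  have hCnonneg : 0 ≤ C := Finset.sum_nonneg fun t _ => by positivity
  have hCpos : 0 < C := hCnonneg.lt_of_ne' hne
  set c : Fin m → ℂ := fun t => (α' t : ℂ) + β t * Complex.I with hc
  set w : H := ∑ t, c t • a t with hw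
  set S : H := ∑ k, x k with hS
  set N : ℝ := ∑ k, ‖x k‖ with hN
  have hNnonneg : 0 ≤ N := Finset.sum_nonneg fun k _ => norm_nonneg _
  have hp2 : ∀ t, p t ^ 2 < α ^ 2 + 1 := fun t =>
    (Real.lt_sqrt (le_of_lt (hp t).1)).mp (hp t).2
  have hq2 : ∀ t, q t ^ 2 < α ^ 2 + 1 := fun t =>
    (Real.lt_sqrt (le_of_lt (hq t).1)).mp (hq t).2
  have hα'pos : ∀ t, 0 < α' t := by
    intro t; rw [hα' t]
    refine inf_pos _ fun k => div_pos ?_ (by have := hxpos k; positivity)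
    nlinarith [hαle k, hp2 t, hα0, hxpos k]
  have hβpos : ∀ t, 0 < β t := by
    intro t; rw [hβ t]
    refine inf_pos _ fun k => div_pos ?_ (by have := hxpos k; positivity)
    nlinarith [hαle k, hq2 t, hα0, hxpos k]
  -- Re ⟪x k, a t⟫ ≥ α' t * ‖x k‖
  have hRe : ∀ k t, α' t * ‖x k‖ ≤ (inner ℂ (x k) (a t) : ℂ).re := by
    intro k t
    have h1 : ‖x k - a t‖ ^ 2 ≤ p t ^ 2 :=
      pow_le_pow_left₀ (norm_nonneg _) (h₁ k t) 2
    have h2 : ‖x k - a t‖ ^ 2 = ‖x k‖ ^ 2 - 2 * (inner ℂ (x k) (a t) : ℂ).re + ‖a t‖ ^ 2 := by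
      simpa using norm_sub_sq (𝕜 := ℂ) (x k) (a t)
    rw [ha.1 t] at h2
    have h3 : α' t ≤ (‖x k‖ ^ 2 - p t ^ 2 + 1) / (2 * ‖x k‖) := (hα' t) ▸ inf_le _ k
    rw [le_div_iff₀ (by have := hxpos k; positivity)] at h3
    nlinarith [hxpos k]
  have hIm : ∀ k t, β t * ‖x k‖ ≤ -(inner ℂ (x k) (a t) : ℂ).im := by
    intro k t
    have h1 : ‖x k - Complex.I • a t‖ ^ 2 ≤ q t ^ 2 :=
      pow_le_pow_left₀ (norm_nonneg _) (h₂ k t) 2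
    have h2 : ‖x k - Complex.I • a t‖ ^ 2
        = ‖x k‖ ^ 2 - 2 * (inner ℂ (x k) (Complex.I • a t) : ℂ).re + ‖Complex.I • a t‖ ^ 2 := by
      exact norm_sub_sq (𝕜 := ℂ) (x k) (Complex.I • a t)
    have h4 : ‖Complex.I • a t‖ = 1 := by
      rw [norm_smul, Complex.norm_I, ha.1 t, one_mul]
    have h5 : (inner ℂ (x k) (Complex.I • a t) : ℂ).re = -(inner ℂ (x k) (a t) : ℂ).im := by
      rw [inner_smul_right]; simp [Complex.mul_re]
    rw [h4, h5] at h2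
    have h3 : β t ≤ (‖x k‖ ^ 2 - q t ^ 2 + 1) / (2 * ‖x k‖) := (hβ t) ▸ inf_le _ k
    rw [le_div_iff₀ (by have := hxpos k; positivity)] at h3
    nlinarith [hxpos k]
  have hkey : ∀ k, C * ‖x k‖ ≤ (inner ℂ (x k) w : ℂ).re := by
    intro k
    have h1 : (inner ℂ (x k) w : ℂ) = ∑ t, c t * (inner ℂ (x k) (a t) : ℂ) := by
      rw [hw, inner_sum]
      exact Finset.sum_congr rfl fun t _ => inner_smul_right _ _ _
    rw [h1, Complex.re_sum, hC, Finset.sum_mul]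
    refine Finset.sum_le_sum fun t _ => ?_
    have hre : (c t * (inner ℂ (x k) (a t) : ℂ)).re
        = α' t * (inner ℂ (x k) (a t) : ℂ).re - β t * (inner ℂ (x k) (a t) : ℂ).im := by
      simp [hc, add_mul, Complex.mul_re]; ring
    rw [hre]
    nlinarith [mul_le_mul_of_nonneg_left (hRe k t) (hα'pos t).le,
      mul_le_mul_of_nonneg_left (hIm k t) (hβpos t).le]
  have hwnorm : ‖w‖ = Real.sqrt C := by
    have h1 : (inner ℂ w w : ℂ) = ∑ t, (starRingEnd ℂ) (c t) * c t := by
      rw [hw]; exact ha.inner_sum c c Finset.univ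
    have h2 : ‖w‖ ^ 2 = C := by
      have := norm_sq_eq_re_inner (𝕜 := ℂ) w
      rw [this, h1]
      rw [RCLike.re_to_complex, Complex.re_sum]
      refine Finset.sum_congr rfl fun t _ => ?_
      have : (starRingEnd ℂ) (c t) * c t = Complex.normSq (c t) := by
        rw [mul_comm, Complex.mul_conj]
      rw [this]
      simp [hc, Complex.normSq_apply]
      ring
    rw [← h2, Real.sqrt_sq (norm_nonneg w)]
  have hSw : C * N ≤ (inner ℂ S w : ℂ).re := by
    have h1 : (inner ℂ S w : ℂ) = ∑ k, (inner ℂ (x k) w : ℂ) := by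
      rw [hS, sum_inner]
    rw [h1, Complex.re_sum, hN, Finset.mul_sum]
    exact Finset.sum_le_sum fun k _ => hkey k
  constructor
  · intro heq
    have h1 : (inner ℂ S w : ℂ).re ≤ ‖S‖ * ‖w‖ := by
      simpa using re_inner_le_norm (𝕜 := ℂ) S w
    have h2 : ‖S‖ * ‖w‖ = C * N := by
      rw [← heq, hwnorm]
      rw [show Real.sqrt C * N * Real.sqrt C = (Real.sqrt C * Real.sqrt C) * N by ring,
        Real.mul_self_sqrt hCnonneg]
    have h3 : (inner ℂ S w : ℂ).re = ‖S‖ * ‖w‖ := le_antisymm h1 (h2 ▸ hSw)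
    have habs : ‖(inner ℂ S w : ℂ)‖ ≤ ‖S‖ * ‖w‖ := norm_inner_le_norm S w
    have habs2 : ‖(inner ℂ S w : ℂ)‖ ≤ (inner ℂ S w : ℂ).re := by
      rw [h3]; exact habs
    have him : (inner ℂ S w : ℂ).im = 0 := by
      have hre : (inner ℂ S w : ℂ).re ≤ ‖(inner ℂ S w : ℂ)‖ := Complex.re_le_norm _
      have heq2 : ‖(inner ℂ S w : ℂ)‖ = (inner ℂ S w : ℂ).re := le_antisymm habs2 hre
      have := Complex.sq_norm (inner ℂ S w : ℂ)
      rw [heq2, Complex.normSq_apply] at this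
      nlinarith
    have hz : (inner ℂ S w : ℂ) = (‖S‖ : ℂ) * (‖w‖ : ℂ) := by
      apply Complex.ext
      · simpa using h3
      · simp [him]
    have h4 : (‖w‖ : ℂ) • S = (‖S‖ : ℂ) • w := inner_eq_norm_mul_iff.mp hz
    rw [hwnorm, ← heq] at h4
    have hsq : (Real.sqrt C : ℂ) ≠ 0 :=
      Complex.ofReal_ne_zero.mpr (ne_of_gt (Real.sqrt_pos.mpr hCpos))
    have h5 : (Real.sqrt C : ℂ) • S = (Real.sqrt C : ℂ) • ((N : ℂ) • w) := by
      rw [h4, Complex.ofReal_mul, mul_smul]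
    have h6 : S = (N : ℂ) • w := smul_right_injective H hsq h5
    rw [h6, ← algebraMap_smul ℂ N w]
    rfl
  · intro heq
    have hNw : S = (N : ℂ) • w := by
      rw [heq, ← algebraMap_smul ℂ N w]; rfl
    rw [show ‖S‖ = ‖(N : ℂ) • w‖ from by rw [hNw]]
    rw [norm_smul, hwnorm, Complex.norm_real, Real.norm_of_nonneg hNnonneg]
    ring
end

section
/- Let H be a complex inner product space and let a₁,…,a_m ∈ H be orthonormal vectors. Suppose the nonzero vectors x₁,…,xₙ ∈ H satisfy ‖x_k − a_t‖ ≤ 1 and ‖x_k − i a_t‖ ≤ 1 for all k ∈ {1,…,n} and all t ∈ {1,…,m}, and let α = min_{1≤k≤n} ‖x_k‖. Then (α/√2) · √m · Σ_{k=1}^n ‖x_k‖ ≤ ‖Σ_{k=1}^n x_k‖. -/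
open Complex

theorem stmt_11 {H : Type*} [NormedAddCommGroup H] [InnerProductSpace ℂ H]
    (m : ℕ) (a : Fin m → H) (ha : Orthonormal ℂ a)
    (n : ℕ) (hn : 0 < n) (x : Fin n → H) (hx : ∀ k, x k ≠ 0)
    (h₁ : ∀ k t, ‖x k - a t‖ ≤ 1) (h₂ : ∀ k t, ‖x k - Complex.I • a t‖ ≤ 1)
    (α : ℝ) (hα : α = ⨅ k, ‖x k‖) :
    (α / Real.sqrt 2) * Real.sqrt m * ∑ k, ‖x k‖ ≤ ‖∑ k, x k‖ := by
  haveI : Nonempty (Fin n) := ⟨⟨0, hn⟩⟩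
  have hna : ∀ t, ‖a t‖ = 1 := ha.1
  -- real/imaginary parts bounds
  have hre : ∀ k t, (‖x k‖^2)/2 ≤ (inner ℂ (a t) (x k) : ℂ).re := by
    intro k t
    have h := h₁ k t
    have hsq : ‖x k - a t‖^2 ≤ 1 := by
      nlinarith [norm_nonneg (x k - a t)]
    rw [@norm_sub_sq ℂ] at hsq
    rw [hna t] at hsq
    rw [show (inner ℂ (x k) (a t) : ℂ) = starRingEnd ℂ (inner ℂ (a t) (x k) : ℂ) from
      (inner_conj_symm (x k) (a t)).symm] at hsq
    simp only [RCLike.re_to_complex, Complex.conj_re] at hsq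
    nlinarith
  have him : ∀ k t, (‖x k‖^2)/2 ≤ (inner ℂ (a t) (x k) : ℂ).im := by
    intro k t
    have h := h₂ k t
    have hsq : ‖x k - Complex.I • a t‖^2 ≤ 1 := by
      nlinarith [norm_nonneg (x k - Complex.I • a t)]
    rw [@norm_sub_sq ℂ] at hsq
    have hnIa : ‖Complex.I • a t‖ = 1 := by
      rw [norm_smul, hna t]; simp
    rw [hnIa] at hsq
    rw [inner_smul_right, show (inner ℂ (x k) (a t) : ℂ) = starRingEnd ℂ (inner ℂ (a t) (x k) : ℂ) from
      (inner_conj_symm (x k) (a t)).symm] at hsq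
    simp only [RCLike.re_to_complex, Complex.mul_re, Complex.I_re, Complex.I_im,
      Complex.conj_re, Complex.conj_im] at hsq
    nlinarith
  set S := ∑ k, x k with hS
  set σ := ∑ k, ‖x k‖^2 with hσ
  have hzre : ∀ t, σ/2 ≤ (inner ℂ (a t) S : ℂ).re := by
    intro t
    rw [hS, inner_sum]
    rw [Complex.re_sum]
    rw [hσ, Finset.sum_div]
    exact Finset.sum_le_sum fun k _ => hre k t
  have hzim : ∀ t, σ/2 ≤ (inner ℂ (a t) S : ℂ).im := by
    intro t
    rw [hS, inner_sum]
    rw [Complex.im_sum]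
    rw [hσ, Finset.sum_div]
    exact Finset.sum_le_sum fun k _ => him k t
  have hσ0 : 0 ≤ σ := Finset.sum_nonneg fun k _ => sq_nonneg _
  have hz : ∀ t, σ^2/2 ≤ ‖(inner ℂ (a t) S : ℂ)‖^2 := by
    intro t
    have h1 := hzre t
    have h2 := hzim t
    rw [Complex.sq_norm, Complex.normSq_apply]
    nlinarith
  -- Bessel
  have hbessel : ∑ t, ‖(inner ℂ (a t) S : ℂ)‖^2 ≤ ‖S‖^2 := ha.sum_inner_products_le S
  have hm : (m : ℝ) * (σ^2/2) ≤ ‖S‖^2 := by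
    calc (m : ℝ) * (σ^2/2) = ∑ _t : Fin m, σ^2/2 := by simp [mul_comm]
    _ ≤ ∑ t, ‖(inner ℂ (a t) S : ℂ)‖^2 := Finset.sum_le_sum fun t _ => hz t
    _ ≤ ‖S‖^2 := hbessel
  -- α bounds
  have hα0 : 0 ≤ α := by
    rw [hα]
    exact Real.iInf_nonneg fun k => norm_nonneg _
  have hαle : ∀ k, α ≤ ‖x k‖ := by
    intro k
    rw [hα]
    exact ciInf_le (Finite.bddBelow_range _) k
  have hασ : α * ∑ k, ‖x k‖ ≤ σ := by
    rw [hσ, Finset.mul_sum]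
    exact Finset.sum_le_sum fun k _ => by nlinarith [hαle k, norm_nonneg (x k)]
  have hsum0 : 0 ≤ ∑ k, ‖x k‖ := Finset.sum_nonneg fun k _ => norm_nonneg _
  -- finish
  have key : ((α / Real.sqrt 2) * Real.sqrt m * ∑ k, ‖x k‖)^2 ≤ ‖S‖^2 := by
    have h2 : (Real.sqrt 2)^2 = 2 := Real.sq_sqrt (by norm_num)
    have hm2 : (Real.sqrt m)^2 = m := Real.sq_sqrt (Nat.cast_nonneg m)
    have : ((α / Real.sqrt 2) * Real.sqrt m * ∑ k, ‖x k‖)^2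
        = (m : ℝ) * ((α * ∑ k, ‖x k‖)^2 / 2) := by
      rw [mul_pow, mul_pow, div_pow, h2, hm2]
      ring
    rw [this]
    have : (m : ℝ) * ((α * ∑ k, ‖x k‖)^2 / 2) ≤ (m : ℝ) * (σ^2/2) := by
      apply mul_le_mul_of_nonneg_left _ (Nat.cast_nonneg m)
      have h := hασ
      nlinarith [mul_nonneg hα0 hsum0]
    linarith
  have hlhs0 : 0 ≤ (α / Real.sqrt 2) * Real.sqrt m * ∑ k, ‖x k‖ := by
    positivity
  nlinarith [norm_nonneg S, key]
end

section
/- Let H be a complex inner product space and a ∈ H a unit vector. Let x₁,…,xₙ ∈ H be nonzero vectors and suppose p₁, p₂ ∈ (0, 1] satisfy ‖x_k − a‖ ≤ p₁ and ‖x_k − i a‖ ≤ p₂ for all k ∈ {1,…,n}. Define α₁ = min_{1≤k≤n} (‖x_k‖² − p₁² + 1)/(2‖x_k‖) and α₂ = min_{1≤k≤n} (‖x_k‖² − p₂² + 1)/(2‖x_k‖). If α₁ ≠ √(1 − p₁²) or α₂ ≠ √(1 − p₂²), then the strict inequality (2 − p₁² − p₂²)^{1/2} · Σ_{k=1}^n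 ‖x_k‖ < ‖Σ_{k=1}^n x_k‖ holds. -/
theorem stmt_13 {H : Type*} [NormedAddCommGroup H] [InnerProductSpace ℂ H]
    (a : H) (ha : ‖a‖ = 1) (n : ℕ) (hn : 0 < n) (x : Fin n → H) (hx : ∀ k, x k ≠ 0)
    (p₁ p₂ : ℝ) (hp₁ : p₁ ∈ Set.Ioc (0 : ℝ) 1) (hp₂ : p₂ ∈ Set.Ioc (0 : ℝ) 1)
    (h₁ : ∀ k, ‖x k - a‖ ≤ p₁) (h₂ : ∀ k, ‖x k - Complex.I • a‖ ≤ p₂)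
    (α₁ α₂ : ℝ)
    (hα₁ : α₁ = ⨅ k, (‖x k‖ ^ 2 - p₁ ^ 2 + 1) / (2 * ‖x k‖))
    (hα₂ : α₂ = ⨅ k, (‖x k‖ ^ 2 - p₂ ^ 2 + 1) / (2 * ‖x k‖))
    (hne : α₁ ≠ Real.sqrt (1 - p₁ ^ 2) ∨ α₂ ≠ Real.sqrt (1 - p₂ ^ 2)) :
    Real.sqrt (2 - p₁ ^ 2 - p₂ ^ 2) * ∑ k, ‖x k‖ < ‖∑ k, x k‖ := by
  have hnonempty : Nonempty (Fin n) := Fin.pos_iff_nonempty.mp hn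
  obtain ⟨hp₁0, hp₁1⟩ := hp₁
  obtain ⟨hp₂0, hp₂1⟩ := hp₂
  have hc₁ : (0:ℝ) ≤ 1 - p₁^2 := by nlinarith
  have hc₂ : (0:ℝ) ≤ 1 - p₂^2 := by nlinarith
  have hx0 : ∀ k, (0:ℝ) < ‖x k‖ := fun k => norm_pos_iff.2 (hx k)
  set T := ∑ k, ‖x k‖ with hTdef
  have hT0 : 0 < T := Finset.sum_pos (fun k _ => hx0 k) Finset.univ_nonempty
  -- pointwise real-part bounds
  have key : ∀ (p : ℝ) (b : H), ‖b‖ = 1 → ∀ k, ‖x k - b‖ ≤ p →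
      (‖x k‖^2 - p^2 + 1)/2 ≤ (inner ℂ (x k) b : ℂ).re := by
    intro p b hb k hk
    have h2 : ‖x k - b‖^2 ≤ p^2 := by
      have := norm_nonneg (x k - b); nlinarith
    have hexp : ‖x k - b‖^2 = ‖x k‖^2 - 2 * (inner ℂ (x k) b : ℂ).re + ‖b‖^2 := by
      have := @norm_sub_sq ℂ H _ _ _ (x k) b
      simpa using this
    rw [hb] at hexp
    nlinarith
  -- each term is at least sqrt(1 - p^2)
  have hterm : ∀ (p : ℝ), 0 ≤ 1 - p^2 → ∀ k : Fin n,
      Real.sqrt (1 - p^2) ≤ (‖x k‖^2 - p^2 + 1)/(2*‖x k‖) := by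
    intro p hc k
    rw [le_div_iff₀ (by linarith [hx0 k])]
    nlinarith [Real.sq_sqrt hc, Real.sqrt_nonneg (1-p^2),
      sq_nonneg (‖x k‖ - Real.sqrt (1-p^2)), hx0 k]
  have hα₁ge : Real.sqrt (1 - p₁^2) ≤ α₁ := hα₁ ▸ le_ciInf (hterm p₁ hc₁)
  have hα₂ge : Real.sqrt (1 - p₂^2) ≤ α₂ := hα₂ ▸ le_ciInf (hterm p₂ hc₂)
  have hα₁le : ∀ k, α₁ ≤ (‖x k‖^2 - p₁^2 + 1)/(2*‖x k‖) := fun k =>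
    hα₁ ▸ ciInf_le (Set.Finite.bddBelow (Set.finite_range _)) k
  have hα₂le : ∀ k, α₂ ≤ (‖x k‖^2 - p₂^2 + 1)/(2*‖x k‖) := fun k =>
    hα₂ ▸ ciInf_le (Set.Finite.bddBelow (Set.finite_range _)) k
  have hα₁0 : 0 ≤ α₁ := le_trans (Real.sqrt_nonneg _) hα₁ge
  have hα₂0 : 0 ≤ α₂ := le_trans (Real.sqrt_nonneg _) hα₂ge
  -- pointwise bounds with α
  have hA : ∀ k, α₁ * ‖x k‖ ≤ (inner ℂ (x k) a : ℂ).re := by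
    intro k
    have h1 := key p₁ a ha k (h₁ k)
    have h2 := (le_div_iff₀ (by linarith [hx0 k])).mp (hα₁le k)
    nlinarith
  have hIa : ‖(Complex.I • a : H)‖ = 1 := by
    rw [norm_smul, Complex.norm_I, ha, one_mul]
  have hB : ∀ k, α₂ * ‖x k‖ ≤ -((inner ℂ (x k) a : ℂ).im) := by
    intro k
    have h1 := key p₂ (Complex.I • a) hIa k (h₂ k)
    have h3 : (inner ℂ (x k) (Complex.I • a) : ℂ).re = -((inner ℂ (x k) a : ℂ).im) := by
      rw [inner_smul_right]
      simp [Complex.mul_re]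
    rw [h3] at h1
    have h2 := (le_div_iff₀ (by linarith [hx0 k])).mp (hα₂le k)
    nlinarith
  -- summed bounds
  set z := (inner ℂ (∑ k, x k) a : ℂ) with hz
  have hSA : α₁ * T ≤ z.re := by
    have : z = ∑ k, (inner ℂ (x k) a : ℂ) := by rw [hz, sum_inner]
    rw [this, Complex.re_sum, hTdef, Finset.mul_sum]
    exact Finset.sum_le_sum fun k _ => hA k
  have hSB : α₂ * T ≤ -z.im := by
    have : z = ∑ k, (inner ℂ (x k) a : ℂ) := by rw [hz, sum_inner]
    rw [this, Complex.im_sum, hTdef, Finset.mul_sum, ← Finset.sum_neg_distrib]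
    exact Finset.sum_le_sum fun k _ => hB k
  have hzn : ‖z‖ ≤ ‖∑ k, x k‖ := by
    have := norm_inner_le_norm (𝕜 := ℂ) (∑ k, x k) a
    rwa [ha, mul_one] at this
  have hz2 : ‖z‖^2 = z.re^2 + z.im^2 := by
    rw [Complex.sq_norm, Complex.normSq_apply]; ring
  -- strictness
  have hstrict : 1 - p₁^2 + (1 - p₂^2) < α₁^2 + α₂^2 := by
    have e₁ : Real.sqrt (1-p₁^2)^2 = 1 - p₁^2 := Real.sq_sqrt hc₁
    have e₂ : Real.sqrt (1-p₂^2)^2 = 1 - p₂^2 := Real.sq_sqrt hc₂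
    have q1 : 1 - p₁^2 ≤ α₁^2 := e₁ ▸ pow_le_pow_left₀ (Real.sqrt_nonneg _) hα₁ge 2
    have q2 : 1 - p₂^2 ≤ α₂^2 := e₂ ▸ pow_le_pow_left₀ (Real.sqrt_nonneg _) hα₂ge 2
    rcases hne with h | h
    · have h1 : Real.sqrt (1-p₁^2) < α₁ := lt_of_le_of_ne hα₁ge (Ne.symm h)
      have q1' : 1 - p₁^2 < α₁^2 := e₁ ▸ pow_lt_pow_left₀ h1 (Real.sqrt_nonneg _) two_ne_zero
      linarith
    · have h1 : Real.sqrt (1-p₂^2) < α₂ := lt_of_le_of_ne hα₂ge (Ne.symm h)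
      have q2' : 1 - p₂^2 < α₂^2 := e₂ ▸ pow_lt_pow_left₀ h1 (Real.sqrt_nonneg _) two_ne_zero
      linarith
  -- finish
  have hs2 : Real.sqrt (2 - p₁^2 - p₂^2)^2 = 2 - p₁^2 - p₂^2 :=
    Real.sq_sqrt (by linarith)
  have h1 : 0 ≤ α₁ * T := mul_nonneg hα₁0 hT0.le
  have h2 : 0 ≤ α₂ * T := mul_nonneg hα₂0 hT0.le
  refine lt_of_pow_lt_pow_left₀ 2 (norm_nonneg _) ?_
  have s1 : (α₁*T)^2 ≤ z.re^2 := pow_le_pow_left₀ h1 hSA 2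
  have s2 : (α₂*T)^2 ≤ z.im^2 := by
    calc (α₂*T)^2 ≤ (-z.im)^2 := pow_le_pow_left₀ h2 hSB 2
    _ = z.im^2 := by ring
  have s3 : ‖z‖^2 ≤ ‖∑ k, x k‖^2 := pow_le_pow_left₀ (norm_nonneg _) hzn 2
  calc (Real.sqrt (2-p₁^2-p₂^2) * T)^2 = (2-p₁^2-p₂^2)*T^2 := by rw [mul_pow, hs2]
  _ < (α₁^2+α₂^2)*T^2 := by
      have h := mul_lt_mul_of_pos_right
        (show (2-p₁^2-p₂^2) < α₁^2+α₂^2 by linarith) (pow_pos hT0 2)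
      linarith
  _ = (α₁*T)^2 + (α₂*T)^2 := by ring
  _ ≤ z.re^2 + z.im^2 := by linarith
  _ = ‖z‖^2 := hz2.symm
  _ ≤ ‖∑ k, x k‖^2 := s3
end

section
/- Let H be a complex inner product space, a ∈ H a unit vector, and M ≥ m > 0, L ≥ ℓ > 0 real numbers. Suppose the nonzero vectors x₁,…,xₙ ∈ H satisfy ‖x_k − ((m+M)/2) a‖ ≤ (M−m)/2 and ‖x_k − ((L+ℓ)/2) i a‖ ≤ (L−ℓ)/2 for all k ∈ {1,…,n}. Define α_{m,M} = min_{1≤k≤n} (‖x_k‖² + mM)/((m+M)‖x_k‖) and α_{ℓ,L} = min_{1≤k≤n} (‖x_k‖² + ℓL)/((ℓ+L)‖x_k‖). Then (α_{m,M}² + α_{ℓ,L}²)^{1/2} · Σ_{k=1}^n ‖x_k‖ ≤ ‖Σ_{k=1}^n x_k‖. -/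
open scoped InnerProductSpace ComplexConjugate

lemma helper14 {H : Type*} [NormedAddCommGroup H] [InnerProductSpace ℂ H]
    (b : H) (hb : ‖b‖ = 1) (c : ℝ) (x : H) :
    ‖x - c • b‖ ^ 2 = ‖x‖ ^ 2 - 2 * c * Complex.re ⟪b, x⟫_ℂ + c ^ 2 := by
  have := @norm_sub_sq ℂ H _ _ _ x (c • b)
  rw [RCLike.real_smul_eq_coe_smul (K := ℂ), inner_smul_right] at this
  rw [RCLike.real_smul_eq_coe_smul (K := ℂ), this, ← inner_conj_symm b x, norm_smul]
  simp [hb]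
  rw [show (⟪x,b⟫_ℂ).re = (⟪b,x⟫_ℂ).re from inner_re_symm (𝕜 := ℂ) x b]
  ring

lemma helper14' {H : Type*} [NormedAddCommGroup H] [InnerProductSpace ℂ H]
    (b : H) (hb : ‖b‖ = 1) (c r : ℝ) (x : H) (h : ‖x - c • b‖ ≤ r) :
    ‖x‖ ^ 2 + c ^ 2 - r ^ 2 ≤ 2 * c * Complex.re ⟪b, x⟫_ℂ := by
  have hsq : ‖x - c • b‖ ^ 2 ≤ r ^ 2 := pow_le_pow_left₀ (norm_nonneg _) h 2
  rw [helper14 b hb c x] at hsq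
  linarith

theorem stmt_14 {H : Type*} [NormedAddCommGroup H] [InnerProductSpace ℂ H]
    (a : H) (ha : ‖a‖ = 1) (m M ℓ L : ℝ) (hm : 0 < m) (hM : m ≤ M) (hℓ : 0 < ℓ) (hL : ℓ ≤ L)
    (n : ℕ) (hn : 0 < n) (x : Fin n → H) (hx : ∀ k, x k ≠ 0)
    (h₁ : ∀ k, ‖x k - ((m + M) / 2 : ℝ) • a‖ ≤ (M - m) / 2)
    (h₂ : ∀ k, ‖x k - ((L + ℓ) / 2 : ℝ) • (Complex.I • a)‖ ≤ (L - ℓ) / 2)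
    (αmM αℓL : ℝ)
    (hαmM : αmM = ⨅ k, (‖x k‖ ^ 2 + m * M) / ((m + M) * ‖x k‖))
    (hαℓL : αℓL = ⨅ k, (‖x k‖ ^ 2 + ℓ * L) / ((ℓ + L) * ‖x k‖)) :
    Real.sqrt (αmM ^ 2 + αℓL ^ 2) * ∑ k, ‖x k‖ ≤ ‖∑ k, x k‖ := by
  haveI : Nonempty (Fin n) := ⟨⟨0, hn⟩⟩
  have hM0 : 0 < M := lt_of_lt_of_le hm hM
  have hL0 : 0 < L := lt_of_lt_of_le hℓ hL
  have hxk : ∀ k, 0 < ‖x k‖ := fun k => norm_pos_iff.mpr (hx k)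
  have hia : ‖Complex.I • a‖ = 1 := by
    rw [norm_smul]; simp [ha]
  -- αmM ≥ 0, αℓL ≥ 0
  have hαmM0 : 0 ≤ αmM := by
    rw [hαmM]
    apply le_ciInf
    intro k
    have := hxk k
    positivity
  have hαℓL0 : 0 ≤ αℓL := by
    rw [hαℓL]
    apply le_ciInf
    intro k
    have := hxk k
    positivity
  -- key per-k bounds
  have key1 : ∀ k, αmM * ‖x k‖ ≤ Complex.re ⟪a, x k⟫_ℂ := by
    intro k
    have h := helper14' a ha ((m+M)/2) ((M-m)/2) (x k) (h₁ k)
    have hmM : 0 < m + M := by linarith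
    have hle : αmM ≤ (‖x k‖ ^ 2 + m * M) / ((m + M) * ‖x k‖) := by
      rw [hαmM]
      exact ciInf_le (Finite.bddBelow_range _) k
    have hineq : ‖x k‖ ^ 2 + m * M ≤ (m + M) * Complex.re ⟪a, x k⟫_ℂ := by nlinarith
    calc αmM * ‖x k‖ ≤ (‖x k‖ ^ 2 + m * M) / ((m + M) * ‖x k‖) * ‖x k‖ := by
          exact mul_le_mul_of_nonneg_right hle (norm_nonneg _)
      _ = (‖x k‖ ^ 2 + m * M) / (m + M) := by
          have ht := (hxk k).ne'
          have hc := hmM.ne'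
          field_simp
      _ ≤ Complex.re ⟪a, x k⟫_ℂ := by
          rw [div_le_iff₀ hmM]; linarith
  have key2 : ∀ k, αℓL * ‖x k‖ ≤ Complex.re ⟪Complex.I • a, x k⟫_ℂ := by
    intro k
    have h := helper14' (Complex.I • a) hia ((L+ℓ)/2) ((L-ℓ)/2) (x k) (h₂ k)
    have hℓL : 0 < ℓ + L := by linarith
    have hle : αℓL ≤ (‖x k‖ ^ 2 + ℓ * L) / ((ℓ + L) * ‖x k‖) := by
      rw [hαℓL]
      exact ciInf_le (Finite.bddBelow_range _) k
    have hineq : ‖x k‖ ^ 2 + ℓ * L ≤ (ℓ + L) * Complex.re ⟪Complex.I • a, x k⟫_ℂ := by nlinarith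
    calc αℓL * ‖x k‖ ≤ (‖x k‖ ^ 2 + ℓ * L) / ((ℓ + L) * ‖x k‖) * ‖x k‖ :=
          mul_le_mul_of_nonneg_right hle (norm_nonneg _)
      _ = (‖x k‖ ^ 2 + ℓ * L) / (ℓ + L) := by
          have ht := (hxk k).ne'
          have hc := hℓL.ne'
          field_simp
      _ ≤ Complex.re ⟪Complex.I • a, x k⟫_ℂ := by
          rw [div_le_iff₀ hℓL]; linarith
  -- re ⟪I•a, y⟫ = im ⟪a, y⟫
  have him : ∀ y : H, Complex.re ⟪Complex.I • a, y⟫_ℂ = Complex.im ⟪a, y⟫_ℂ := by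
    intro y
    rw [inner_smul_left]
    simp
  set S := ∑ k, x k with hS
  set T := ∑ k, ‖x k‖ with hT
  have hT0 : 0 ≤ T := Finset.sum_nonneg fun k _ => norm_nonneg _
  have hinner : ⟪a, S⟫_ℂ = ∑ k, ⟪a, x k⟫_ℂ := inner_sum _ _ _
  have hre : αmM * T ≤ Complex.re ⟪a, S⟫_ℂ := by
    rw [hinner]
    rw [Complex.re_sum]
    rw [hT, Finset.mul_sum]
    exact Finset.sum_le_sum fun k _ => key1 k
  have him' : αℓL * T ≤ Complex.im ⟪a, S⟫_ℂ := by
    have : ⟪Complex.I • a, S⟫_ℂ = ∑ k, ⟪Complex.I • a, x k⟫_ℂ := inner_sum _ _ _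
    rw [← him S, this, Complex.re_sum, hT, Finset.mul_sum]
    refine Finset.sum_le_sum fun k _ => key2 k
  -- conclude
  have habs : ‖⟪a, S⟫_ℂ‖ ≤ ‖S‖ := by
    have := norm_inner_le_norm (𝕜 := ℂ) a S
    simpa [ha] using this
  have h1 : Real.sqrt (αmM ^ 2 + αℓL ^ 2) * T ≤ ‖⟪a, S⟫_ℂ‖ := by
    have hmm : (αmM * T) ^ 2 ≤ (Complex.re ⟪a, S⟫_ℂ) ^ 2 := by
      have h0 : 0 ≤ αmM * T := mul_nonneg hαmM0 hT0
      nlinarith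
    have hll : (αℓL * T) ^ 2 ≤ (Complex.im ⟪a, S⟫_ℂ) ^ 2 := by
      have h0 : 0 ≤ αℓL * T := mul_nonneg hαℓL0 hT0
      nlinarith
    have heq : Real.sqrt ((αmM * T) ^ 2 + (αℓL * T) ^ 2)
        = Real.sqrt (αmM ^ 2 + αℓL ^ 2) * T := by
      rw [show (αmM * T) ^ 2 + (αℓL * T) ^ 2 = (αmM ^ 2 + αℓL ^ 2) * T ^ 2 by ring,
        Real.sqrt_mul (by positivity), Real.sqrt_sq hT0]
    rw [← heq, Complex.norm_def, Complex.normSq_apply]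
    apply Real.sqrt_le_sqrt
    nlinarith [hmm, hll]
  exact le_trans h1 habs
end

section
/- Let H be a complex inner product space, a ∈ H a unit vector, and M ≥ m > 0, L ≥ ℓ > 0 real numbers. Suppose the nonzero vectors x₁,…,xₙ ∈ H satisfy ‖x_k − ((m+M)/2) a‖ ≤ (M−m)/2 and ‖x_k − ((L+ℓ)/2) i a‖ ≤ (L−ℓ)/2 for all k ∈ {1,…,n}. Define α_{m,M} = min_{1≤k≤n} (‖x_k‖² + mM)/((m+M)‖x_k‖) and α_{ℓ,L} = min_{1≤k≤n} (‖x_k‖² + ℓL)/((ℓ+L)‖x_k‖). Then equality (α_{m,M}² + α_{ℓ,L}²)^{1/2} · Σ_{k=1}^n ‖x_k‖ = ‖Σ_{k=1}^n x_k‖ holds if and only if Σ_{k=1}^n x_k = (α_{m,M} + i α_{ℓ,L}) (Σ_{k=1}^n ‖x_k‖) a. -/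
set_option maxHeartbeats 1600000
open scoped InnerProductSpace ComplexConjugate

lemma aux_re {H : Type*} [NormedAddCommGroup H] [InnerProductSpace ℂ H] (b x : H) (hb : ‖b‖ = 1)
    (t r : ℝ) (h : ‖x - t • b‖ ≤ r) : ‖x‖ ^ 2 + t ^ 2 - r ^ 2 ≤ 2 * t * (⟪x, b⟫_ℂ).re := by
  have h2 : ‖x - t • b‖ ^ 2 ≤ r ^ 2 := pow_le_pow_left₀ (norm_nonneg _) h 2
  have h3 : ‖x - t • b‖ ^ 2 = ‖x‖ ^ 2 - 2 * (t * (⟪x, b⟫_ℂ).re) + t ^ 2 := by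
    rw [norm_sub_sq (𝕜 := ℂ), norm_smul]
    have e : ⟪x, t • b⟫_ℂ = (t : ℂ) * ⟪x, b⟫_ℂ := by
      rw [RCLike.real_smul_eq_coe_smul (K := ℂ), inner_smul_right]; rfl
    rw [e]
    simp only [hb, Real.norm_eq_abs, mul_one, Complex.mul_re, Complex.ofReal_re,
      Complex.ofReal_im, RCLike.re_to_complex, zero_mul, sub_zero, sq_abs]
  nlinarith

theorem stmt_15 {H : Type*} [NormedAddCommGroup H] [InnerProductSpace ℂ H]
    (a : H) (ha : ‖a‖ = 1) (m M ℓ L : ℝ) (hm : 0 < m) (hM : m ≤ M) (hℓ : 0 < ℓ) (hL : ℓ ≤ L)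
    (n : ℕ) (hn : 0 < n) (x : Fin n → H) (hx : ∀ k, x k ≠ 0)
    (h₁ : ∀ k, ‖x k - ((m + M) / 2 : ℝ) • a‖ ≤ (M - m) / 2)
    (h₂ : ∀ k, ‖x k - ((L + ℓ) / 2 : ℝ) • (Complex.I • a)‖ ≤ (L - ℓ) / 2)
    (αmM αℓL : ℝ)
    (hαmM : αmM = ⨅ k, (‖x k‖ ^ 2 + m * M) / ((m + M) * ‖x k‖))
    (hαℓL : αℓL = ⨅ k, (‖x k‖ ^ 2 + ℓ * L) / ((ℓ + L) * ‖x k‖)) :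
    Real.sqrt (αmM ^ 2 + αℓL ^ 2) * ∑ k, ‖x k‖ = ‖∑ k, x k‖ ↔
      ∑ k, x k = ((αmM : ℂ) + αℓL * Complex.I) • ((∑ k, ‖x k‖ : ℝ) • a) := by
  haveI : Nonempty (Fin n) := ⟨⟨0, hn⟩⟩
  set c : ℂ := (αmM : ℂ) + αℓL * Complex.I with hc
  set S : H := ∑ k, x k with hS
  set s : ℝ := ∑ k, ‖x k‖ with hs
  have hxn : ∀ k, 0 < ‖x k‖ := fun k => norm_pos_iff.mpr (hx k)
  have hmM : (0:ℝ) < m + M := by linarith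
  have hℓL : (0:ℝ) < ℓ + L := by linarith
  have hpos1 : ∀ k, 0 < (‖x k‖ ^ 2 + m * M) / ((m + M) * ‖x k‖) := fun k =>
    div_pos (by nlinarith [hxn k]) (mul_pos hmM (hxn k))
  have hpos2 : ∀ k, 0 < (‖x k‖ ^ 2 + ℓ * L) / ((ℓ + L) * ‖x k‖) := fun k =>
    div_pos (by nlinarith [hxn k]) (mul_pos hℓL (hxn k))
  have hbdd1 : BddBelow (Set.range fun k => (‖x k‖ ^ 2 + m * M) / ((m + M) * ‖x k‖)) :=
    (Set.finite_range _).bddBelow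
  have hbdd2 : BddBelow (Set.range fun k => (‖x k‖ ^ 2 + ℓ * L) / ((ℓ + L) * ‖x k‖)) :=
    (Set.finite_range _).bddBelow
  have hα1pos : 0 < αmM := by
    obtain ⟨k0, hk0⟩ := Finite.exists_min fun k => (‖x k‖ ^ 2 + m * M) / ((m + M) * ‖x k‖)
    have : αmM = (‖x k0‖ ^ 2 + m * M) / ((m + M) * ‖x k0‖) :=
      le_antisymm (hαmM ▸ ciInf_le hbdd1 k0) (hαmM ▸ le_ciInf hk0)
    rw [this]; exact hpos1 k0
  have hα2pos : 0 < αℓL := by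
    obtain ⟨k0, hk0⟩ := Finite.exists_min fun k => (‖x k‖ ^ 2 + ℓ * L) / ((ℓ + L) * ‖x k‖)
    have : αℓL = (‖x k0‖ ^ 2 + ℓ * L) / ((ℓ + L) * ‖x k0‖) :=
      le_antisymm (hαℓL ▸ ciInf_le hbdd2 k0) (hαℓL ▸ le_ciInf hk0)
    rw [this]; exact hpos2 k0
  set r0 : ℝ := Real.sqrt (αmM ^ 2 + αℓL ^ 2) with hr0
  have hr0sq : r0 ^ 2 = αmM ^ 2 + αℓL ^ 2 := Real.sq_sqrt (by positivity)
  have hr0pos : 0 < r0 := Real.sqrt_pos.mpr (by positivity)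
  have hnc : ‖c‖ = r0 := by
    rw [hr0, hc, Complex.norm_def, Complex.normSq_apply]
    norm_num [Complex.add_re, Complex.add_im]
    ring_nf
  have hsnn : 0 ≤ s := Finset.sum_nonneg fun k _ => norm_nonneg _
  have key1 : ∀ k, αmM * ‖x k‖ ≤ (⟪x k, a⟫_ℂ).re := by
    intro k
    have hle : αmM ≤ (‖x k‖ ^ 2 + m * M) / ((m + M) * ‖x k‖) := hαmM ▸ ciInf_le hbdd1 k
    have h1 : αmM * ((m + M) * ‖x k‖) ≤ ‖x k‖ ^ 2 + m * M :=
      (le_div_iff₀ (mul_pos hmM (hxn k))).mp hle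
    have h2 := aux_re a (x k) ha ((m + M) / 2) ((M - m) / 2) (h₁ k)
    nlinarith [hxn k]
  have key2 : ∀ k, αℓL * ‖x k‖ ≤ (⟪x k, Complex.I • a⟫_ℂ).re := by
    intro k
    have hle : αℓL ≤ (‖x k‖ ^ 2 + ℓ * L) / ((ℓ + L) * ‖x k‖) := hαℓL ▸ ciInf_le hbdd2 k
    have h1 : αℓL * ((ℓ + L) * ‖x k‖) ≤ ‖x k‖ ^ 2 + ℓ * L :=
      (le_div_iff₀ (mul_pos hℓL (hxn k))).mp hle
    have hIa : ‖Complex.I • a‖ = 1 := by rw [norm_smul, Complex.norm_I, ha, one_mul]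
    have h2 := aux_re (Complex.I • a) (x k) hIa ((L + ℓ) / 2) ((L - ℓ) / 2) (h₂ k)
    nlinarith [hxn k]
  have sum1 : αmM * s ≤ (⟪S, a⟫_ℂ).re := by
    rw [hS, sum_inner, hs, Finset.mul_sum, Complex.re_sum]
    exact Finset.sum_le_sum fun k _ => key1 k
  have sum2 : αℓL * s ≤ (⟪S, Complex.I • a⟫_ℂ).re := by
    rw [hS, sum_inner, hs, Finset.mul_sum, Complex.re_sum]
    exact Finset.sum_le_sum fun k _ => key2 k
  have hre : (⟪S, c • a⟫_ℂ).re = αmM * (⟪S, a⟫_ℂ).re + αℓL * (⟪S, Complex.I • a⟫_ℂ).re := by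
    rw [inner_smul_right, inner_smul_right, hc]
    simp only [RCLike.re_to_complex, add_mul, Complex.add_re, Complex.mul_re, Complex.mul_im,
      Complex.ofReal_re, Complex.ofReal_im, Complex.I_re, Complex.I_im]
    ring
  constructor
  · intro heq
    have hreS : r0 * ‖S‖ ≤ (⟪S, c • a⟫_ℂ).re := by
      rw [hre, ← heq]
      nlinarith [sum1, sum2, hα1pos.le, hα2pos.le, hr0sq]
    have habs : ‖⟪S, c • a⟫_ℂ‖ ≤ ‖S‖ * r0 := by
      have := norm_inner_le_norm (𝕜 := ℂ) S (c • a)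
      rwa [norm_smul, hnc, ha, mul_one] at this
    have hzre : (⟪S, c • a⟫_ℂ).re = ‖S‖ * r0 :=
      le_antisymm (le_trans (Complex.re_le_norm _) habs) (by linarith [hreS])
    have hzim : (⟪S, c • a⟫_ℂ).im = 0 := by
      have h1 : ‖⟪S, c • a⟫_ℂ‖ ^ 2
          = (⟪S, c • a⟫_ℂ).re ^ 2 + (⟪S, c • a⟫_ℂ).im ^ 2 := by
        rw [Complex.sq_norm, Complex.normSq_apply]; ring
      nlinarith [Complex.re_le_norm ⟪S, c • a⟫_ℂ, norm_nonneg ⟪S, c • a⟫_ℂ,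
        norm_nonneg S, habs]
    have hzeq : ⟪S, c • a⟫_ℂ = (‖S‖ : ℂ) * (‖c • a‖ : ℝ) := by
      apply Complex.ext
      · simp only [Complex.mul_re, Complex.ofReal_re, Complex.ofReal_im, mul_zero, zero_mul,
          sub_zero, hzre]
        rw [norm_smul, hnc, ha, mul_one]
      · rw [hzim]; simp
    have hkey := (inner_eq_norm_mul_iff (𝕜 := ℂ) (x := S) (y := c • a)).mp hzeq
    rw [norm_smul, hnc, ha, mul_one, ← heq] at hkey
    have hr0c : (r0 : ℂ) ≠ 0 := by exact_mod_cast ne_of_gt hr0pos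
    have hkey' : (r0 : ℂ) • S = ((r0 * s : ℝ) : ℂ) • c • a := hkey
    have hS' : S = ((s : ℂ) * c) • a := by
      refine smul_right_injective H hr0c ?_
      show (r0 : ℂ) • S = (r0 : ℂ) • ((s : ℂ) * c) • a
      rw [hkey', smul_smul, smul_smul]
      congr 1
      push_cast
      ring
    rw [smul_comm, RCLike.real_smul_eq_coe_smul (K := ℂ), smul_smul]
    exact hS'
  · intro heq
    rw [heq, norm_smul, norm_smul, hnc, Real.norm_eq_abs, abs_of_nonneg hsnn, ha, mul_one]
end

section
/- Let H be a complex inner product space, a ∈ H a unit vector, and M ≥ m > 0, L ≥ ℓ > 0 real numbers. Suppose the nonzero vectors x₁,…,xₙ ∈ H satisfy ‖x_k − ((m+M)/2) a‖ ≤ (M−m)/2 and ‖x_k − ((L+ℓ)/2) i a‖ ≤ (L−ℓ)/2 for all k ∈ {1,…,n}. Define α_{m,M} = min_{1≤k≤n} (‖x_k‖² + mM)/((m+M)‖x_k‖) and α_{ℓ,L} = min_{1≤k≤n} (‖x_k‖² + ℓL)/((ℓ+L)‖x_k‖). If α_{m,M} ≠ 2√(mM)/(m+M) or α_{ℓ,L}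 ≠ 2√(ℓL)/(ℓ+L), then the strict inequality 2·(mM/(m+M)² + ℓL/(ℓ+L)²)^{1/2} · Σ_{k=1}^n ‖x_k‖ < ‖Σ_{k=1}^n x_k‖ holds. -/
local notation "⟪" x ", " y "⟫" => @inner ℂ _ _ x y

lemma key1 {H : Type*} [NormedAddCommGroup H] [InnerProductSpace ℂ H]
    (b x : H) (hb : ‖b‖ = 1) (p q : ℝ) (hp : 0 < p) (hpq : p ≤ q)
    (h : ‖x - ((p + q) / 2 : ℝ) • b‖ ≤ (q - p) / 2) :
    ‖x‖ ^ 2 + p * q ≤ (p + q) * (⟪x, b⟫).re := by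
  have h2 : ‖x - ((p + q) / 2 : ℝ) • b‖ ^ 2 ≤ ((q - p) / 2) ^ 2 :=
    pow_le_pow_left₀ (norm_nonneg _) h 2
  rw [@norm_sub_sq ℂ] at h2
  have hsm : (((p + q) / 2 : ℝ)) • b = (((p + q) / 2 : ℝ) : ℂ) • b :=
    RCLike.real_smul_eq_coe_smul (K := ℂ) _ _
  rw [hsm, inner_smul_right] at h2
  have hnorm : ‖(((p + q) / 2 : ℝ) : ℂ) • b‖ = |(p + q) / 2| := by
    rw [norm_smul, hb, mul_one, Complex.norm_real, Real.norm_eq_abs]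
  rw [hnorm] at h2
  simp only [RCLike.mul_re, Complex.ofReal_re, Complex.ofReal_im, RCLike.re_to_complex,
    RCLike.im_to_complex, zero_mul, sub_zero] at h2
  have habs : |(p + q) / 2| = (p + q) / 2 := abs_of_pos (by linarith)
  rw [habs] at h2
  nlinarith [h2]

lemma amgm (p q t : ℝ) (hp : 0 < p) (hpq : p ≤ q) (ht : 0 < t) :
    2 * Real.sqrt (p * q) / (p + q) ≤ (t ^ 2 + p * q) / ((p + q) * t) := by
  have hq : 0 < q := lt_of_lt_of_le hp hpq
  have hs : Real.sqrt (p * q) ^ 2 = p * q := Real.sq_sqrt (mul_pos hp hq).le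
  rw [div_le_div_iff₀ (by linarith) (mul_pos (by linarith) ht)]
  nlinarith [sq_nonneg (t - Real.sqrt (p * q)), Real.sqrt_nonneg (p * q)]

theorem stmt_16 {H : Type*} [NormedAddCommGroup H] [InnerProductSpace ℂ H]
    (a : H) (ha : ‖a‖ = 1) (m M ℓ L : ℝ) (hm : 0 < m) (hM : m ≤ M) (hℓ : 0 < ℓ) (hL : ℓ ≤ L)
    (n : ℕ) (hn : 0 < n) (x : Fin n → H) (hx : ∀ k, x k ≠ 0)
    (h₁ : ∀ k, ‖x k - ((m + M) / 2 : ℝ) • a‖ ≤ (M - m) / 2)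
    (h₂ : ∀ k, ‖x k - ((L + ℓ) / 2 : ℝ) • (Complex.I • a)‖ ≤ (L - ℓ) / 2)
    (αmM αℓL : ℝ)
    (hαmM : αmM = ⨅ k, (‖x k‖ ^ 2 + m * M) / ((m + M) * ‖x k‖))
    (hαℓL : αℓL = ⨅ k, (‖x k‖ ^ 2 + ℓ * L) / ((ℓ + L) * ‖x k‖))
    (hne : αmM ≠ 2 * Real.sqrt (m * M) / (m + M) ∨ αℓL ≠ 2 * Real.sqrt (ℓ * L) / (ℓ + L)) :
    2 * Real.sqrt (m * M / (m + M) ^ 2 + ℓ * L / (ℓ + L) ^ 2) * ∑ k, ‖x k‖ < ‖∑ k, x k‖ := by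
  haveI : Nonempty (Fin n) := Fin.pos_iff_nonempty.mp hn
  have hMpos : 0 < M := lt_of_lt_of_le hm hM
  have hLpos : 0 < L := lt_of_lt_of_le hℓ hL
  have ht : ∀ k, (0 : ℝ) < ‖x k‖ := fun k => norm_pos_iff.mpr (hx k)
  have hb2 : ‖Complex.I • a‖ = 1 := by
    rw [norm_smul, ha, mul_one, Complex.norm_I]
  have hk1 : ∀ k, ‖x k‖ ^ 2 + m * M ≤ (m + M) * (⟪x k, a⟫).re :=
    fun k => key1 a (x k) ha m M hm hM (h₁ k)
  have hk2 : ∀ k, ‖x k‖ ^ 2 + ℓ * L ≤ (ℓ + L) * (⟪x k, Complex.I • a⟫).re := by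
    intro k
    exact key1 (Complex.I • a) (x k) hb2 ℓ L hℓ hL (by
      have := h₂ k
      rwa [show L + ℓ = ℓ + L by ring] at this)
  set f1 : Fin n → ℝ := fun k => (‖x k‖ ^ 2 + m * M) / ((m + M) * ‖x k‖) with hf1
  set f2 : Fin n → ℝ := fun k => (‖x k‖ ^ 2 + ℓ * L) / ((ℓ + L) * ‖x k‖) with hf2
  have hbd1 : BddBelow (Set.range f1) := Set.Finite.bddBelow (Set.finite_range f1)
  have hbd2 : BddBelow (Set.range f2) := Set.Finite.bddBelow (Set.finite_range f2)
  have hα1le : ∀ k, αmM ≤ f1 k := fun k => hαmM ▸ ciInf_le hbd1 k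
  have hα2le : ∀ k, αℓL ≤ f2 k := fun k => hαℓL ▸ ciInf_le hbd2 k
  have hbase1 : 2 * Real.sqrt (m * M) / (m + M) ≤ αmM := by
    rw [hαmM]; exact le_ciInf fun k => amgm m M (‖x k‖) hm hM (ht k)
  have hbase2 : 2 * Real.sqrt (ℓ * L) / (ℓ + L) ≤ αℓL := by
    rw [hαℓL]; exact le_ciInf fun k => amgm ℓ L (‖x k‖) hℓ hL (ht k)
  have hbp1 : 0 < 2 * Real.sqrt (m * M) / (m + M) :=
    div_pos (by have := Real.sqrt_pos.mpr (mul_pos hm hMpos); linarith) (by linarith)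
  have hbp2 : 0 < 2 * Real.sqrt (ℓ * L) / (ℓ + L) :=
    div_pos (by have := Real.sqrt_pos.mpr (mul_pos hℓ hLpos); linarith) (by linarith)
  have hα1pos : 0 < αmM := lt_of_lt_of_le hbp1 hbase1
  have hα2pos : 0 < αℓL := lt_of_lt_of_le hbp2 hbase2
  have hr1 : ∀ k, αmM * ‖x k‖ ≤ (⟪x k, a⟫).re := by
    intro k
    have hcancel : f1 k * ((m + M) * ‖x k‖) = ‖x k‖ ^ 2 + m * M :=
      div_mul_cancel₀ _ (ne_of_gt (mul_pos (by linarith) (ht k)))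
    have h1 : αmM * ((m + M) * ‖x k‖) ≤ f1 k * ((m + M) * ‖x k‖) :=
      mul_le_mul_of_nonneg_right (hα1le k) (mul_pos (by linarith) (ht k)).le
    rw [hcancel] at h1
    have h3 := hk1 k
    nlinarith [h1, h3, ht k]
  have hr2 : ∀ k, αℓL * ‖x k‖ ≤ (⟪x k, Complex.I • a⟫).re := by
    intro k
    have hcancel : f2 k * ((ℓ + L) * ‖x k‖) = ‖x k‖ ^ 2 + ℓ * L :=
      div_mul_cancel₀ _ (ne_of_gt (mul_pos (by linarith) (ht k)))
    have h1 : αℓL * ((ℓ + L) * ‖x k‖) ≤ f2 k * ((ℓ + L) * ‖x k‖) :=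
      mul_le_mul_of_nonneg_right (hα2le k) (mul_pos (by linarith) (ht k)).le
    rw [hcancel] at h1
    have h3 := hk2 k
    nlinarith [h1, h3, ht k]
  set S : ℝ := ∑ k, ‖x k‖ with hS
  have hSpos : 0 < S := Finset.sum_pos (fun k _ => ht k) Finset.univ_nonempty
  set u : H := ∑ k, x k with hu
  have hA : αmM * S ≤ (⟪u, a⟫).re := by
    rw [hu, sum_inner, Complex.re_sum, hS, Finset.mul_sum]
    exact Finset.sum_le_sum fun k _ => hr1 k
  have hB : αℓL * S ≤ (⟪u, Complex.I • a⟫).re := by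
    rw [hu, sum_inner, Complex.re_sum, hS, Finset.mul_sum]
    exact Finset.sum_le_sum fun k _ => hr2 k
  have hIB : (⟪u, Complex.I • a⟫).re = -(⟪u, a⟫).im := by
    rw [inner_smul_right]
    simp [Complex.mul_re]
  have hnormsq : (⟪u, a⟫).re ^ 2 + (⟪u, a⟫).im ^ 2 ≤ ‖u‖ ^ 2 := by
    have h := norm_inner_le_norm (𝕜 := ℂ) u a
    rw [ha, mul_one] at h
    have h2 : ‖⟪u, a⟫‖ ^ 2 = (⟪u, a⟫).re ^ 2 + (⟪u, a⟫).im ^ 2 := by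
      rw [Complex.sq_norm, Complex.normSq_apply]; ring
    calc (⟪u, a⟫).re ^ 2 + (⟪u, a⟫).im ^ 2 = ‖⟪u, a⟫‖ ^ 2 := h2.symm
      _ ≤ ‖u‖ ^ 2 := pow_le_pow_left₀ (norm_nonneg _) h 2
  have hAS : (αmM * S) ^ 2 ≤ (⟪u, a⟫).re ^ 2 :=
    pow_le_pow_left₀ (mul_pos hα1pos hSpos).le hA 2
  have hBS : (αℓL * S) ^ 2 ≤ (⟪u, a⟫).im ^ 2 := by
    have him : αℓL * S ≤ -(⟪u, a⟫).im := hIB ▸ hB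
    have h1 : (αℓL * S) ^ 2 ≤ (-(⟪u, a⟫).im) ^ 2 :=
      pow_le_pow_left₀ (mul_pos hα2pos hSpos).le him 2
    simpa [neg_sq] using h1
  have hmain : (αmM ^ 2 + αℓL ^ 2) * S ^ 2 ≤ ‖u‖ ^ 2 := by
    have : (αmM ^ 2 + αℓL ^ 2) * S ^ 2 = (αmM * S) ^ 2 + (αℓL * S) ^ 2 := by ring
    rw [this]
    linarith [hAS, hBS, hnormsq]
  have hsq1 : (2 * Real.sqrt (m * M) / (m + M)) ^ 2 = 4 * (m * M / (m + M) ^ 2) := by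
    rw [div_pow, mul_pow, Real.sq_sqrt (mul_pos hm hMpos).le]; ring
  have hsq2 : (2 * Real.sqrt (ℓ * L) / (ℓ + L)) ^ 2 = 4 * (ℓ * L / (ℓ + L) ^ 2) := by
    rw [div_pow, mul_pow, Real.sq_sqrt (mul_pos hℓ hLpos).le]; ring
  have hstrict : 4 * (m * M / (m + M) ^ 2 + ℓ * L / (ℓ + L) ^ 2) < αmM ^ 2 + αℓL ^ 2 := by
    have h1 : (2 * Real.sqrt (m * M) / (m + M)) ^ 2 ≤ αmM ^ 2 :=
      pow_le_pow_left₀ hbp1.le hbase1 2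
    have h2 : (2 * Real.sqrt (ℓ * L) / (ℓ + L)) ^ 2 ≤ αℓL ^ 2 :=
      pow_le_pow_left₀ hbp2.le hbase2 2
    rcases hne with h | h
    · have hlt : 2 * Real.sqrt (m * M) / (m + M) < αmM := lt_of_le_of_ne hbase1 (Ne.symm h)
      have h1' : (2 * Real.sqrt (m * M) / (m + M)) ^ 2 < αmM ^ 2 :=
        pow_lt_pow_left₀ hlt hbp1.le (by norm_num)
      rw [hsq1] at h1'
      rw [hsq2] at h2
      linarith
    · have hlt : 2 * Real.sqrt (ℓ * L) / (ℓ + L) < αℓL := lt_of_le_of_ne hbase2 (Ne.symm h)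
      have h2' : (2 * Real.sqrt (ℓ * L) / (ℓ + L)) ^ 2 < αℓL ^ 2 :=
        pow_lt_pow_left₀ hlt hbp2.le (by norm_num)
      rw [hsq2] at h2'
      rw [hsq1] at h1
      linarith
  set c : ℝ := m * M / (m + M) ^ 2 + ℓ * L / (ℓ + L) ^ 2 with hc
  have hcpos : 0 ≤ c :=
    add_nonneg (div_nonneg (mul_pos hm hMpos).le (sq_nonneg _))
      (div_nonneg (mul_pos hℓ hLpos).le (sq_nonneg _))
  have hfin : (2 * Real.sqrt c * S) ^ 2 < ‖u‖ ^ 2 := by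
    have hcs : Real.sqrt c ^ 2 = c := Real.sq_sqrt hcpos
    have heq : (2 * Real.sqrt c * S) ^ 2 = 4 * c * S ^ 2 := by
      rw [mul_pow, mul_pow, hcs]; ring
    rw [heq]
    have hlt : 4 * c * S ^ 2 < (αmM ^ 2 + αℓL ^ 2) * S ^ 2 :=
      mul_lt_mul_of_pos_right hstrict (pow_pos hSpos 2)
    linarith [hmain]
  exact lt_of_pow_lt_pow_left₀ 2 (norm_nonneg u) hfin
end

section
/- Let a ∈ ℂ with |a| = 1. Let z₁,…,zₙ ∈ ℂ be nonzero complex numbers and set α = min_{1≤k≤n} |z_k|. Suppose p₁, p₂ ∈ (0, √(α² + 1)) satisfy |z_k − a| ≤ p₁ and |z_k − i a| ≤ p₂ for all k ∈ {1,…,n}. Define α₁ = min_{1≤k≤n} (|z_k|² − p₁² + 1)/(2|z_k|) and α₂ = min_{1≤k≤n} (|z_k|² − p₂² + 1)/(2|z_k|). Then √(α₁² + α₂²) · Σ_{k=1}^n |z_k| ≤ |Σ_{k=1}^n z_k|, with equality if and only if Σ_{k=1}^n z_k = (α₁ + i α₂) (Σ_{k=1}^n |z_k|) a. -/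
set_option maxHeartbeats 1000000


theorem stmt_17 (a : ℂ) (ha : ‖a‖ = 1)
    (n : ℕ) (hn : 0 < n) (z : Fin n → ℂ) (hz : ∀ k, z k ≠ 0)
    (α : ℝ) (hα : α = ⨅ k, ‖z k‖)
    (p₁ p₂ : ℝ) (hp₁ : p₁ ∈ Set.Ioo 0 (Real.sqrt (α ^ 2 + 1)))
    (hp₂ : p₂ ∈ Set.Ioo 0 (Real.sqrt (α ^ 2 + 1)))
    (h₁ : ∀ k, ‖z k - a‖ ≤ p₁) (h₂ : ∀ k, ‖z k - Complex.I * a‖ ≤ p₂)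
    (α₁ α₂ : ℝ)
    (hα₁ : α₁ = ⨅ k, (‖z k‖ ^ 2 - p₁ ^ 2 + 1) / (2 * ‖z k‖))
    (hα₂ : α₂ = ⨅ k, (‖z k‖ ^ 2 - p₂ ^ 2 + 1) / (2 * ‖z k‖)) :
    Real.sqrt (α₁ ^ 2 + α₂ ^ 2) * ∑ k, ‖z k‖ ≤ ‖∑ k, z k‖ ∧
      (Real.sqrt (α₁ ^ 2 + α₂ ^ 2) * ∑ k, ‖z k‖ = ‖∑ k, z k‖ ↔
        ∑ k, z k = ((α₁ : ℂ) + α₂ * Complex.I) * (∑ k, (‖z k‖ : ℂ)) * a) := by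
  haveI : Nonempty (Fin n) := Fin.pos_iff_nonempty.mp hn
  have habs : ∀ k, 0 < ‖z k‖ := fun k => norm_pos_iff.mpr (hz k)
  have hαle : ∀ k, α ≤ ‖z k‖ := by
    intro k; rw [hα]; exact ciInf_le (Finite.bddBelow_range _) k
  have hα0 : 0 ≤ α := by
    rw [hα]; exact le_ciInf fun k => norm_nonneg _
  have hna : a.re * a.re + a.im * a.im = 1 := by
    have : Complex.normSq a = 1 := by rw [← Complex.sq_norm, ha]; norm_num
    rw [← Complex.normSq_apply]; exact this
  have hp1sq : p₁ ^ 2 < α ^ 2 + 1 := by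
    have h := hp₁.2
    have h2 := Real.sq_sqrt (show (0:ℝ) ≤ α ^ 2 + 1 by positivity)
    nlinarith [hp₁.1, Real.sqrt_nonneg (α ^ 2 + 1)]
  have hp2sq : p₂ ^ 2 < α ^ 2 + 1 := by
    have h := hp₂.2
    have h2 := Real.sq_sqrt (show (0:ℝ) ≤ α ^ 2 + 1 by positivity)
    nlinarith [hp₂.1, Real.sqrt_nonneg (α ^ 2 + 1)]
  have hα₁le : ∀ k, α₁ ≤ (‖z k‖ ^ 2 - p₁ ^ 2 + 1) / (2 * ‖z k‖) := by
    intro k; rw [hα₁]; exact ciInf_le (Finite.bddBelow_range _) k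
  have hα₂le : ∀ k, α₂ ≤ (‖z k‖ ^ 2 - p₂ ^ 2 + 1) / (2 * ‖z k‖) := by
    intro k; rw [hα₂]; exact ciInf_le (Finite.bddBelow_range _) k
  have hα₁pos : 0 < α₁ := by
    obtain ⟨k₀, hk₀⟩ := Finite.exists_min
      (fun k => (‖z k‖ ^ 2 - p₁ ^ 2 + 1) / (2 * ‖z k‖))
    have hpos : 0 < (‖z k₀‖ ^ 2 - p₁ ^ 2 + 1) / (2 * ‖z k₀‖) := by
      apply div_pos
      · nlinarith [hαle k₀, hα0]
      · linarith [habs k₀]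
    rw [hα₁]; exact lt_of_lt_of_le hpos (le_ciInf hk₀)
  have hα₂pos : 0 < α₂ := by
    obtain ⟨k₀, hk₀⟩ := Finite.exists_min
      (fun k => (‖z k‖ ^ 2 - p₂ ^ 2 + 1) / (2 * ‖z k‖))
    have hpos : 0 < (‖z k₀‖ ^ 2 - p₂ ^ 2 + 1) / (2 * ‖z k₀‖) := by
      apply div_pos
      · nlinarith [hαle k₀, hα0]
      · linarith [habs k₀]
    rw [hα₂]; exact lt_of_lt_of_le hpos (le_ciInf hk₀)
  have hRe : ∀ k, α₁ * ‖z k‖ ≤ (z k * (starRingEnd ℂ) a).re := by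
    intro k
    have h1 : ‖z k - a‖ ^ 2 ≤ p₁ ^ 2 :=
      pow_le_pow_left₀ (norm_nonneg _) (h₁ k) 2
    rw [Complex.sq_norm, Complex.normSq_apply, Complex.sub_re, Complex.sub_im] at h1
    have h2 : α₁ * (2 * ‖z k‖) ≤ ‖z k‖ ^ 2 - p₁ ^ 2 + 1 := by
      have h3 := hα₁le k
      rw [le_div_iff₀ (by linarith [habs k])] at h3
      linarith
    have h3 : ‖z k‖ ^ 2 = (z k).re * (z k).re + (z k).im * (z k).im := by
      rw [Complex.sq_norm, Complex.normSq_apply]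
    simp only [Complex.mul_re, Complex.conj_re, Complex.conj_im]
    nlinarith [h1, h2, h3, hna]
  have hIm : ∀ k, α₂ * ‖z k‖ ≤ (z k * (starRingEnd ℂ) a).im := by
    intro k
    have h1 : ‖z k - Complex.I * a‖ ^ 2 ≤ p₂ ^ 2 :=
      pow_le_pow_left₀ (norm_nonneg _) (h₂ k) 2
    rw [Complex.sq_norm, Complex.normSq_apply, Complex.sub_re, Complex.sub_im,
      Complex.mul_re, Complex.mul_im, Complex.I_re, Complex.I_im] at h1
    have h2 : α₂ * (2 * ‖z k‖) ≤ ‖z k‖ ^ 2 - p₂ ^ 2 + 1 := by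
      have h3 := hα₂le k
      rw [le_div_iff₀ (by linarith [habs k])] at h3
      linarith
    have h3 : ‖z k‖ ^ 2 = (z k).re * (z k).re + (z k).im * (z k).im := by
      rw [Complex.sq_norm, Complex.normSq_apply]
    simp only [Complex.mul_im, Complex.conj_re, Complex.conj_im]
    nlinarith [h1, h2, h3, hna]
  set S := ∑ k, z k with hS
  set T := ∑ k, ‖z k‖ with hT
  have hT0 : 0 < T := Finset.sum_pos (fun k _ => habs k) Finset.univ_nonempty
  set x := (S * (starRingEnd ℂ) a).re with hx
  set y := (S * (starRingEnd ℂ) a).im with hy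
  have hwsum : S * (starRingEnd ℂ) a = ∑ k, z k * (starRingEnd ℂ) a := by
    rw [hS, Finset.sum_mul]
  have hwre : α₁ * T ≤ x := by
    rw [hx, hwsum, Complex.re_sum, hT, Finset.mul_sum]
    exact Finset.sum_le_sum fun k _ => hRe k
  have hwim : α₂ * T ≤ y := by
    rw [hy, hwsum, Complex.im_sum, hT, Finset.mul_sum]
    exact Finset.sum_le_sum fun k _ => hIm k
  have habsS : ‖S‖ = Real.sqrt (x ^ 2 + y ^ 2) := by
    have h1 : ‖S * (starRingEnd ℂ) a‖ = ‖S‖ := by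
      rw [norm_mul, Complex.norm_conj, ha, mul_one]
    rw [← h1, Complex.norm_def, Complex.normSq_apply]
    congr 1; ring
  have key : Real.sqrt (α₁ ^ 2 + α₂ ^ 2) * T = Real.sqrt ((α₁ * T) ^ 2 + (α₂ * T) ^ 2) := by
    conv_lhs => rw [← Real.sqrt_sq hT0.le]
    rw [← Real.sqrt_mul (by positivity)]
    congr 1; ring
  have hx0 : 0 ≤ α₁ * T := mul_nonneg hα₁pos.le hT0.le
  have hy0 : 0 ≤ α₂ * T := mul_nonneg hα₂pos.le hT0.le
  have hineq : Real.sqrt (α₁ ^ 2 + α₂ ^ 2) * T ≤ ‖S‖ := by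
    rw [key, habsS]
    apply Real.sqrt_le_sqrt
    have h1 : (α₁ * T) ^ 2 ≤ x ^ 2 := pow_le_pow_left₀ hx0 hwre 2
    have h2 : (α₂ * T) ^ 2 ≤ y ^ 2 := pow_le_pow_left₀ hy0 hwim 2
    linarith
  have hTc : (∑ k, ((‖z k‖ : ℂ))) = (T : ℂ) := by
    rw [hT, Complex.ofReal_sum]
  clear_value x y S T
  refine ⟨hineq, ?_, ?_⟩
  · intro h
    have hsq : (α₁ * T) ^ 2 + (α₂ * T) ^ 2 = x ^ 2 + y ^ 2 := by
      rw [key, habsS] at h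
      exact (Real.sqrt_inj (add_nonneg (sq_nonneg _) (sq_nonneg _))
        (add_nonneg (sq_nonneg _) (sq_nonneg _))).mp h
    have hxe : x = α₁ * T := by
      have hle : x ≤ α₁ * T := by nlinarith [hwre, hwim, hx0, hy0]
      linarith [hwre]
    have hye : y = α₂ * T := by
      have hle : y ≤ α₂ * T := by nlinarith [hwre, hwim, hx0, hy0]
      linarith [hwim]
    have hSa : S = (S * (starRingEnd ℂ) a) * a := by
      rw [mul_assoc]
      have : (starRingEnd ℂ) a * a = 1 := by
        rw [← Complex.normSq_eq_conj_mul_self, ← Complex.sq_norm, ha]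
        norm_num
      rw [this, mul_one]
    have hw : S * (starRingEnd ℂ) a = ((α₁ : ℂ) + α₂ * Complex.I) * (T : ℂ) := by
      apply Complex.ext
      · simp [← hx, hxe]
      · simp [← hy, hye]
    rw [hTc, ← hw, ← hSa]
  · intro h
    rw [h, hTc, norm_mul, norm_mul, ha, mul_one, Complex.norm_real,
      Real.norm_of_nonneg hT0.le, Complex.norm_add_mul_I]
end

section
/- Let a ∈ ℂ with |a| = 1. Suppose the nonzero complex numbers z₁,…,zₙ satisfy |z_k − a| ≤ 1 and |z_k − i a| ≤ 1 for all k ∈ {1,…,n}, and let α = min_{1≤k≤n} |z_k|. Then (α/√2) · Σ_{k=1}^n |z_k| ≤ |Σ_{k=1}^n z_k|, with equality if and only if Σ_{k=1}^n z_k = α·((1+i)/2)·(Σ_{k=1}^n |z_k|)·a. -/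
set_option maxHeartbeats 800000

theorem stmt_18 (a : ℂ) (ha : ‖a‖ = 1)
    (n : ℕ) (hn : 0 < n) (z : Fin n → ℂ) (hz : ∀ k, z k ≠ 0)
    (h₁ : ∀ k, ‖z k - a‖ ≤ 1) (h₂ : ∀ k, ‖z k - Complex.I * a‖ ≤ 1)
    (α : ℝ) (hα : α = ⨅ k, ‖z k‖) :
    (α / Real.sqrt 2) * ∑ k, ‖z k‖ ≤ ‖∑ k, z k‖ ∧
      ((α / Real.sqrt 2) * ∑ k, ‖z k‖ = ‖∑ k, z k‖ ↔
        ∑ k, z k = (α : ℂ) * ((1 + Complex.I) / 2) * (∑ k, (‖z k‖ : ℂ)) * a) := by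
  have hne : Nonempty (Fin n) := ⟨⟨0, hn⟩⟩
  have hαle : ∀ k, α ≤ ‖z k‖ := by
    intro k; rw [hα]
    exact ciInf_le (Set.Finite.bddBelow (Set.finite_range _)) k
  have hαpos : 0 < α := by
    obtain ⟨k, hk⟩ := exists_eq_ciInf_of_finite (f := fun k => ‖z k‖)
    rw [hα, ← hk]
    exact norm_pos_iff.mpr (hz k)
  set T := ∑ k, ‖z k‖ with hT
  have hTpos : 0 < T := Finset.sum_pos (fun k _ => norm_pos_iff.mpr (hz k)) Finset.univ_nonempty
  set S := ∑ k, z k with hSdef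
  set W := S * (starRingEnd ℂ) a with hWdef
  have haconj : a * (starRingEnd ℂ) a = 1 := by
    rw [Complex.mul_conj]
    norm_cast
    rw [Complex.normSq_eq_norm_sq, ha]; norm_num
  have habsW : ‖W‖ = ‖S‖ := by
    rw [hWdef, norm_mul, Complex.norm_conj, ha, mul_one]
  have hS : S = W * a := by
    rw [hWdef, mul_assoc, mul_comm ((starRingEnd ℂ) a) a, haconj, mul_one]
  -- key pointwise inequalities for w k = z k * conj a
  have key : ∀ k, ‖z k‖ ^ 2 ≤ 2 * (z k * (starRingEnd ℂ) a).re ∧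
      ‖z k‖ ^ 2 ≤ 2 * (z k * (starRingEnd ℂ) a).im := by
    intro k
    set w := z k * (starRingEnd ℂ) a with hw
    have habsw : ‖w‖ = ‖z k‖ := by
      rw [hw, norm_mul, Complex.norm_conj, ha, mul_one]
    have hw1 : w - 1 = (z k - a) * (starRingEnd ℂ) a := by
      rw [sub_mul, hw, haconj]
    have hwi : w - Complex.I = (z k - Complex.I * a) * (starRingEnd ℂ) a := by
      rw [sub_mul, hw, mul_assoc, haconj, mul_one]
    have hn1 : Complex.normSq (w - 1) ≤ 1 := by
      rw [← Complex.sq_norm, hw1, norm_mul, Complex.norm_conj, ha, mul_one]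
      nlinarith [h₁ k, norm_nonneg (z k - a)]
    have hni : Complex.normSq (w - Complex.I) ≤ 1 := by
      rw [← Complex.sq_norm, hwi, norm_mul, Complex.norm_conj, ha, mul_one]
      nlinarith [h₂ k, norm_nonneg (z k - Complex.I * a)]
    rw [← habsw, Complex.sq_norm]
    simp only [Complex.normSq_apply, Complex.sub_re, Complex.sub_im, Complex.one_re,
      Complex.one_im, Complex.I_re, Complex.I_im] at hn1 hni ⊢
    constructor <;> nlinarith
  have habsk : ∀ k, α * ‖z k‖ ≤ ‖z k‖ ^ 2 := by
    intro k
    have := hαle k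
    nlinarith [norm_nonneg (z k)]
  have hWre : α * T ≤ 2 * W.re := by
    have : W.re = ∑ k, (z k * (starRingEnd ℂ) a).re := by
      rw [hWdef, hSdef, Finset.sum_mul, Complex.re_sum]
    rw [this, hT, Finset.mul_sum, Finset.mul_sum]
    exact Finset.sum_le_sum fun k _ => le_trans (habsk k) (key k).1
  have hWim : α * T ≤ 2 * W.im := by
    have : W.im = ∑ k, (z k * (starRingEnd ℂ) a).im := by
      rw [hWdef, hSdef, Finset.sum_mul, Complex.im_sum]
    rw [this, hT, Finset.mul_sum, Finset.mul_sum]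
    exact Finset.sum_le_sum fun k _ => le_trans (habsk k) (key k).2
  have hWsq : ‖W‖ ^ 2 = W.re ^ 2 + W.im ^ 2 := by
    rw [Complex.sq_norm, Complex.normSq_apply]; ring
  have hs2 : Real.sqrt 2 ^ 2 = 2 := Real.sq_sqrt (by norm_num)
  have hspos : (0:ℝ) < Real.sqrt 2 := Real.sqrt_pos.mpr (by norm_num)
  have hWnn : 0 ≤ ‖W‖ := norm_nonneg _
  have hαT : 0 < α * T := mul_pos hαpos hTpos
  have hsqle : (α * T) ^ 2 ≤ (‖W‖ * Real.sqrt 2) ^ 2 := by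
    have h1 : (α * T) ^ 2 ≤ (2 * W.re) ^ 2 := by nlinarith
    have h2 : (α * T) ^ 2 ≤ (2 * W.im) ^ 2 := by nlinarith
    nlinarith [hWsq, hs2]
  have main : α / Real.sqrt 2 * T ≤ ‖W‖ := by
    rw [div_mul_eq_mul_div, div_le_iff₀ hspos]
    exact (pow_le_pow_iff_left₀ hαT.le (mul_nonneg hWnn hspos.le) two_ne_zero).mp hsqle
  constructor
  · rw [← habsW]; exact main
  constructor
  · intro heq
    have hWabs : ‖W‖ = α / Real.sqrt 2 * T := by rw [habsW, heq]
    have hsq : W.re ^ 2 + W.im ^ 2 = α ^ 2 * T ^ 2 / 2 := by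
      rw [← hWsq, hWabs]
      field_simp
      nlinarith [hs2]
    have hre : W.re = α * T / 2 := by nlinarith
    have him : W.im = α * T / 2 := by nlinarith
    have hWeq : W = (α : ℂ) * ((1 + Complex.I) / 2) * (T : ℂ) := by
      have step : W = ((α * T / 2 : ℝ) : ℂ) + ((α * T / 2 : ℝ) : ℂ) * Complex.I := by
        apply Complex.ext <;> simp [hre, him]
      rw [step]; push_cast; ring
    have hTc : ∑ k, (‖z k‖ : ℂ) = (T : ℂ) := by
      rw [hT]; push_cast; rfl
    rw [hSdef] at hS ⊢
    rw [hS, hWeq, hTc]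
  · intro heq
    have hTc : ∑ k, (‖z k‖ : ℂ) = (T : ℂ) := by
      rw [hT]; push_cast; rfl
    rw [hTc] at heq
    have habs1I : ‖1 + Complex.I‖ = Real.sqrt 2 := by
      rw [Complex.norm_def, Complex.normSq_apply]
      norm_num
    rw [heq]
    rw [norm_mul, norm_mul, norm_mul, norm_div, Complex.norm_real, Complex.norm_real,
      habs1I, ha, mul_one, Complex.norm_two]
    rw [Real.norm_of_nonneg hαpos.le, Real.norm_of_nonneg hTpos.le]
    rw [div_mul_eq_mul_div, div_eq_iff hspos.ne']
    linear_combination (-(α * T) / 2) * hs2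
end

section
/- (Diaz–Metcalf) Let H be a real or complex inner product space and a ∈ H a unit vector. Suppose r ≥ 0 and the nonzero vectors x₁,…,xₙ ∈ H satisfy r ≤ Re⟨x_k, a⟩ / ‖x_k‖ for all k ∈ {1,…,n}. Then r · Σ_{k=1}^n ‖x_k‖ ≤ ‖Σ_{k=1}^n x_k‖, with equality if and only if Σ_{k=1}^n x_k = r (Σ_{k=1}^n ‖x_k‖) a. -/
theorem stmt_19 {𝕜 H : Type*} [RCLike 𝕜] [NormedAddCommGroup H] [InnerProductSpace 𝕜 H]
    (a : H) (ha : ‖a‖ = 1) (r : ℝ) (hr : 0 ≤ r)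
    (n : ℕ) (x : Fin n → H) (hx : ∀ k, x k ≠ 0)
    (h : ∀ k, r ≤ RCLike.re (inner 𝕜 (x k) a : 𝕜) / ‖x k‖) :
    r * ∑ k, ‖x k‖ ≤ ‖∑ k, x k‖ ∧
      (r * ∑ k, ‖x k‖ = ‖∑ k, x k‖ ↔ ∑ k, x k = ((r * ∑ k, ‖x k‖ : ℝ) : 𝕜) • a) := by
  set S := ∑ k, x k with hS
  have key : ∀ k, r * ‖x k‖ ≤ RCLike.re (inner 𝕜 (x k) a : 𝕜) := by
    intro k
    have hpos : 0 < ‖x k‖ := norm_pos_iff.2 (hx k)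
    calc r * ‖x k‖ ≤ (RCLike.re (inner 𝕜 (x k) a : 𝕜) / ‖x k‖) * ‖x k‖ :=
          mul_le_mul_of_nonneg_right (h k) hpos.le
      _ = _ := div_mul_cancel₀ _ hpos.ne'
  have hre : RCLike.re (inner 𝕜 S a : 𝕜) = ∑ k, RCLike.re (inner 𝕜 (x k) a : 𝕜) := by
    rw [hS, sum_inner, map_sum]
  have h1 : r * ∑ k, ‖x k‖ ≤ RCLike.re (inner 𝕜 S a : 𝕜) := by
    rw [hre, Finset.mul_sum]
    exact Finset.sum_le_sum fun k _ => key k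
  have h2 : RCLike.re (inner 𝕜 S a : 𝕜) ≤ ‖S‖ := by
    calc RCLike.re (inner 𝕜 S a : 𝕜) ≤ ‖S‖ * ‖a‖ := re_inner_le_norm _ _
      _ = ‖S‖ := by rw [ha, mul_one]
  have hle : r * ∑ k, ‖x k‖ ≤ ‖S‖ := h1.trans h2
  refine ⟨hle, ?_, ?_⟩
  · intro heq
    have hre' : RCLike.re (inner 𝕜 S a : 𝕜) = ‖S‖ := le_antisymm h2 (heq ▸ h1)
    have hz : ‖S - ((‖S‖ : ℝ) : 𝕜) • a‖ ^ 2 = 0 := by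
      rw [@norm_sub_sq 𝕜, inner_smul_right, norm_smul, ha, RCLike.re_ofReal_mul,
        hre']
      simp
      ring
    have hz' : S = ((‖S‖ : ℝ) : 𝕜) • a := by
      have := pow_eq_zero_iff (n := 2) (by norm_num) |>.mp hz
      have := norm_eq_zero.mp this
      exact sub_eq_zero.mp this
    rw [hz', ← heq]
  · intro heq
    have hsum : 0 ≤ r * ∑ k, ‖x k‖ :=
      mul_nonneg hr (Finset.sum_nonneg fun k _ => norm_nonneg _)
    rw [hS] at heq
    rw [hS, heq, norm_smul, ha, mul_one, RCLike.norm_ofReal, abs_of_nonneg hsum]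
end
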